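/- arXiv:math/0602352 — 5 statements merged into one kernel-verified Lean document; each statement's English description precedes it below -/
import Mathlib

section
/- Let K be a field, r ∈ K[Γ] monic squarefree of degree d, b ∈ M_m(K[Γ]) with deg(b) ≤ d-1, and ℓ ≥ 1 an integer such that for every root γ of r, ℓ is not an eigenvalue of b(γ)/r'(γ). Then for any U ∈ K[Γ]^m there exist V, W ∈ K[Γ]^m with deg(V) < d, deg(W) ≤ max(max(2d-2, deg U) - d, 0), such that U/r^{ℓ+1} dΓ = ∇(V/r^ℓ) + (W/r^ℓ) dΓ, where ∇ = d/dΓ + b/r. -/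
open Polynomial

/-- first reduction step (reduction of pole order at a finite pole).
`K` a field of characteristic 0, `r` monic squarefree of degree `d`, `b` an `m × m` matrix
of polynomials of degree `≤ d-1`, and `ℓ ≥ 1` such that for every root `γ` of `r` (in an
algebraic closure) `ℓ` is not an eigenvalue of `b(γ)/r'(γ)`. Then for any `U ∈ K[Γ]^m`
there exist `V, W ∈ K[Γ]^m` with `deg V < d`, `deg W ≤ max(max(2d-2, deg U) - d, 0)` and
`U/r^{ℓ+1} dΓ = ∇(V/r^ℓ) + (W/r^ℓ) dΓ` where `∇ = d/dΓ + b/r`; after clearing the (nonzero)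
denominator `r^{ℓ+1}` this identity reads `U = r·V' - ℓ·r'·V + b·V + r·W`. -/
theorem stmt1 {K : Type*} [Field K] [CharZero K] (m d : ℕ) (hd : 1 ≤ d)
    (r : Polynomial K) (hmonic : r.Monic) (hsf : Squarefree r) (hdeg : r.natDegree = d)
    (b : Matrix (Fin m) (Fin m) (Polynomial K)) (hb : ∀ i j, (b i j).degree ≤ (d - 1 : ℕ))
    (ℓ : ℕ) (hℓ : 1 ≤ ℓ)
    (heig : ∀ γ : AlgebraicClosure K, aeval γ r = 0 →
      ((ℓ : AlgebraicClosure K) • (1 : Matrix (Fin m) (Fin m) (AlgebraicClosure K))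
        - (aeval γ (derivative r))⁻¹ • b.map (fun q => aeval γ q)).det ≠ 0)
    (U : Fin m → Polynomial K) :
    ∃ V W : Fin m → Polynomial K,
      (∀ i, (V i).degree < (d : WithBot ℕ)) ∧
      (∀ i, (W i).degree ≤
        ((max (max (2*d - 2) (Finset.univ.sup fun i => (U i).natDegree) - d) 0 : ℕ) : WithBot ℕ)) ∧
      (∀ i, U i = r * derivative (V i) - (ℓ : Polynomial K) * derivative r * V i
        + b.mulVec V i + r * W i) := by
  classical
  set L := AlgebraicClosure K with hL
  set s : Polynomial K := derivative r with hs
  have hr0 : r ≠ 0 := hmonic.ne_zero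
  have hrdeg : r.degree = (d : WithBot ℕ) := by
    rw [degree_eq_natDegree hr0, hdeg]
  have hsep : IsCoprime r s := PerfectField.separable_iff_squarefree.mpr hsf
  set M : Matrix (Fin m) (Fin m) (Polynomial K) := b - ((ℓ : Polynomial K) * s) • 1 with hM
  set p : Polynomial K := M.det with hp
  -- coprimality of p and r
  have hcop : IsCoprime p r := by
    rw [Polynomial.isCoprime_iff_aeval_ne_zero_of_isAlgClosed K L]
    intro γ
    by_cases hγ : aeval γ r = 0
    · left
      have hc : aeval γ s ≠ 0 := by
        obtain ⟨a, c, h1⟩ := hsep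
        intro h0
        have h2 := congrArg (aeval γ) h1
        simp only [map_add, map_mul, map_one, hγ, h0, mul_zero, add_zero] at h2
        exact one_ne_zero h2.symm
      have hdet := heig γ hγ
      have key : (aeval γ) p = (M.map (aeval γ)).det := AlgHom.map_det _ M
      have hmap : M.map (aeval γ)
          = (-(aeval γ s)) • ((ℓ : L) • (1 : Matrix (Fin m) (Fin m) L)
            - (aeval γ s)⁻¹ • b.map (fun q => aeval γ q)) := by
        ext i j
        simp only [Matrix.map_apply, hM, Matrix.sub_apply, Matrix.smul_apply,
          Matrix.one_apply, smul_eq_mul, map_sub, map_mul, map_natCast]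
        by_cases hij : i = j
        · simp only [hij, if_pos rfl, if_true, map_one]
          linear_combination (-(aeval γ (b j j))) * mul_inv_cancel₀ hc
        · simp only [if_neg hij, mul_zero, sub_zero, mul_zero, map_zero]
          linear_combination (-(aeval γ (b i j))) * mul_inv_cancel₀ hc
      rw [key, hmap, Matrix.det_smul, Fintype.card_fin]
      exact mul_ne_zero (pow_ne_zero _ (neg_ne_zero.mpr hc)) hdet
    · right; exact hγ
  obtain ⟨a, c, hac⟩ := hcop
  -- definition of V
  set adjU : Fin m → Polynomial K := M.adjugate.mulVec (fun i => a * U i) with hadjU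
  set V : Fin m → Polynomial K := fun i => adjU i %ₘ r with hV
  have hVdeg : ∀ i, (V i).degree < (d : WithBot ℕ) := by
    intro i
    rw [← hrdeg]
    exact degree_modByMonic_lt _ hmonic
  have hVnat : ∀ i, (V i).natDegree ≤ d - 1 := by
    intro i
    by_cases h0 : V i = 0
    · simp [h0]
    · have := (natDegree_lt_iff_degree_lt h0).mpr (by exact_mod_cast hVdeg i)
      omega
  -- key congruence
  have hMadj : ∀ i, M.mulVec adjU i = p * (a * U i) := by
    intro i
    rw [hadjU, Matrix.mulVec_mulVec, Matrix.mul_adjugate, ← hp, Matrix.smul_mulVec,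
      Matrix.one_mulVec]
    simp
  have hdvd1 : ∀ j, r ∣ (adjU j - V j) := by
    intro j
    refine ⟨adjU j /ₘ r, ?_⟩
    have := modByMonic_add_div (adjU j) r
    rw [hV]
    linear_combination -this
  have hdvd2 : ∀ i, r ∣ (U i - M.mulVec V i) := by
    intro i
    have h1 : M.mulVec adjU i - M.mulVec V i = ∑ j, M i j * (adjU j - V j) := by
      simp [Matrix.mulVec, dotProduct, mul_sub, Finset.sum_sub_distrib]
    have h2 : r ∣ M.mulVec adjU i - M.mulVec V i :=
      h1 ▸ Finset.dvd_sum fun j _ => (hdvd1 j).mul_left _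
    have h3 : r ∣ U i - M.mulVec adjU i := by
      rw [hMadj i]
      exact ⟨c * U i, by linear_combination (U i) * hac.symm⟩
    have h4 : U i - M.mulVec V i
        = (U i - M.mulVec adjU i) + (M.mulVec adjU i - M.mulVec V i) := by ring
    rw [h4]; exact dvd_add h3 h2
  have hMV : ∀ i, M.mulVec V i = b.mulVec V i - (ℓ : Polynomial K) * s * V i := by
    intro i
    rw [hM, Matrix.sub_mulVec, Matrix.smul_mulVec, Matrix.one_mulVec]
    simp [smul_eq_mul]
  -- the numerator F and W
  set F : Fin m → Polynomial K :=
    fun i => U i + (ℓ : Polynomial K) * s * V i - b.mulVec V i - r * derivative (V i) with hF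
  have hFdvd : ∀ i, r ∣ F i := by
    intro i
    have : F i = (U i - M.mulVec V i) - r * derivative (V i) := by
      rw [hF, hMV i]; ring
    rw [this]
    exact dvd_sub (hdvd2 i) ⟨derivative (V i), rfl⟩
  set W : Fin m → Polynomial K := fun i => F i /ₘ r with hW
  have hFW : ∀ i, F i = r * W i := by
    intro i
    have h0 : F i %ₘ r = 0 := (modByMonic_eq_zero_iff_dvd hmonic).mpr (hFdvd i)
    have h1 := modByMonic_add_div (F i) r
    rw [h0, zero_add] at h1
    exact h1.symm
  -- degree bound for F
  set N : ℕ := max (2*d - 2) (Finset.univ.sup fun i => (U i).natDegree) with hN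
  have hbnat : ∀ i j, (b i j).natDegree ≤ d - 1 := fun i j =>
    natDegree_le_iff_degree_le.mpr (hb i j)
  have hsnat : s.natDegree ≤ d - 1 := by
    have h1 : s.natDegree ≤ r.natDegree - 1 := natDegree_derivative_le r
    omega
  have hFdeg : ∀ i, (F i).natDegree ≤ N := by
    intro i
    have hU : (U i).natDegree ≤ N := by
      have h0 : (U i).natDegree ≤ Finset.univ.sup fun i => (U i).natDegree :=
        Finset.le_sup (f := fun i => (U i).natDegree) (Finset.mem_univ i)
      rw [hN]
      omega
    have h1 : ((ℓ : Polynomial K) * s * V i).natDegree ≤ N := by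
      have e1 : ((ℓ : Polynomial K) * s * V i).natDegree
          ≤ ((ℓ : Polynomial K) * s).natDegree + (V i).natDegree := natDegree_mul_le
      have e2 : ((ℓ : Polynomial K) * s).natDegree
          ≤ ((ℓ : Polynomial K)).natDegree + s.natDegree := natDegree_mul_le
      have e3 : ((ℓ : Polynomial K)).natDegree = 0 := natDegree_natCast ℓ
      have e4 := hVnat i
      rw [hN]
      omega
    have h2 : (b.mulVec V i).natDegree ≤ N := by
      have : b.mulVec V i = ∑ j, b i j * V j := by
        simp [Matrix.mulVec, dotProduct]
      have hsum : (∑ j, b i j * V j).natDegree ≤ (d - 1) + (d - 1) :=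
        natDegree_sum_le_of_forall_le _ _ fun j _ =>
          le_trans natDegree_mul_le (add_le_add (hbnat i j) (hVnat j))
      rw [this, hN]
      omega
    have h3 : (r * derivative (V i)).natDegree ≤ N := by
      by_cases h0 : (V i).natDegree = 0
      · obtain ⟨x, hx⟩ := natDegree_eq_zero.mp h0
        rw [← hx]
        simp
      · have hlt := natDegree_derivative_lt h0
        have := hVnat i
        refine le_trans natDegree_mul_le ?_
        rw [hdeg, hN]
        omega
    calc (F i).natDegree
        ≤ max (U i + (ℓ : Polynomial K) * s * V i - b.mulVec V i).natDegree
            (r * derivative (V i)).natDegree := natDegree_sub_le _ _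
      _ ≤ N := by
          refine max_le (le_trans (natDegree_sub_le _ _) (max_le (le_trans (natDegree_add_le _ _)
            (max_le hU h1)) h2)) h3
  refine ⟨V, W, hVdeg, ?_, ?_⟩
  · intro i
    by_cases h0 : W i = 0
    · simp [h0]
    · have hFne : F i ≠ 0 := by rw [hFW i]; exact mul_ne_zero hr0 h0
      have := hFdeg i
      rw [hFW i, natDegree_mul hr0 h0, hdeg] at this
      have hle : (W i).natDegree ≤ max (max (2*d - 2) (Finset.univ.sup fun i => (U i).natDegree) - d) 0 := by
        rw [hN] at this; omega
      exact le_trans (degree_le_natDegree) (by exact_mod_cast hle)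
  · intro i
    have h1 : U i + (ℓ : Polynomial K) * s * V i - b.mulVec V i - r * derivative (V i)
        = r * W i := hFW i
    linear_combination h1
end

section
/- Let K be a field of characteristic 0, r, b ∈ K[Γ] data of a connection ∇ = d/dΓ + b/r on A^m with A = K[Γ, 1/r], r monic squarefree of degree d, deg(b) ≤ d-1, and suppose ρ is a positive integer larger than every integer eigenvalue of b(γ)/r'(γ) for each root γ of r, and larger than every integer eigenvalue of -b_{d-1}. Then the cokernel of ∇: A^m → A^m dΓ is spanned over K by the images of the forms e_k·(Γ^i/r^j) dΓ (0 ≤ i < d, 1 ≤ j ≤ ρ, 1 ≤ k ≤ m) and e_k·Γ^j dΓ (0 ≤ j ≤ ρ-2, 1 ≤ k ≤ m). -/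
open Polynomial

/-- The derivative with respect to `Γ` of a rational function, computed via the
quotient rule on the reduced numerator and denominator. -/
noncomputable def ratDeriv {K : Type*} [Field K] (x : RatFunc K) : RatFunc K :=
  algebraMap (Polynomial K) (RatFunc K)
      (derivative x.num * x.denom - x.num * derivative x.denom) /
    algebraMap (Polynomial K) (RatFunc K) (x.denom ^ 2)

/-- Membership in `A = K[Γ, 1/r]`, viewed inside the field of rational functions. -/
def inA {K : Type*} [Field K] (r : Polynomial K) (x : RatFunc K) : Prop :=
  ∃ (f : Polynomial K) (n : ℕ),
    x = algebraMap (Polynomial K) (RatFunc K) f / (algebraMap (Polynomial K) (RatFunc K) r) ^ n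

/-- The connection `∇ = d/dΓ + b/r` acting on column vectors of rational functions. -/
noncomputable def nabla {K : Type*} [Field K] (m : ℕ) (r : Polynomial K)
    (b : Matrix (Fin m) (Fin m) (Polynomial K)) (v : Fin m → RatFunc K) : Fin m → RatFunc K :=
  fun i => ratDeriv (v i) +
    ((Matrix.of fun i j => algebraMap (Polynomial K) (RatFunc K) (b i j) /
        algebraMap (Polynomial K) (RatFunc K) r).mulVec v) i

namespace Stmt3Aux

variable {K : Type*} [Field K]

local notation "φ" => algebraMap (Polynomial K) (RatFunc K)

lemma pdiv_eq_pdiv {a b c d : Polynomial K} (hb : b ≠ 0) (hd : d ≠ 0) (h : a * d = c * b) :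
    φ a / φ b = φ c / φ d := by
  rw [div_eq_div_iff (RatFunc.algebraMap_ne_zero hb) (RatFunc.algebraMap_ne_zero hd),
    ← map_mul, ← map_mul, h]

lemma pdiv_add_pdiv (a b c d : Polynomial K) (hb : b ≠ 0) (hd : d ≠ 0) :
    φ a / φ b + φ c / φ d = φ (a * d + b * c) / φ (b * d) := by
  rw [div_add_div _ _ (RatFunc.algebraMap_ne_zero hb) (RatFunc.algebraMap_ne_zero hd),
    ← map_mul, ← map_mul, ← map_mul, ← map_add]

lemma ratDeriv_div (P Q : Polynomial K) (hQ : Q ≠ 0) :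
    ratDeriv (φ P / φ Q) = φ (derivative P * Q - P * derivative Q) / φ (Q ^ 2) := by
  by_cases hP : P = 0
  · subst hP
    simp [ratDeriv]
  set x : RatFunc K := φ P / φ Q with hx
  have hden := RatFunc.denom_ne_zero x
  have key : x.num * Q = P * x.denom := by
    apply RatFunc.algebraMap_injective K
    rw [map_mul, map_mul]
    have h1 : φ x.num / φ x.denom = φ P / φ Q := by rw [RatFunc.num_div_denom]
    rw [div_eq_div_iff (RatFunc.algebraMap_ne_zero hden) (RatFunc.algebraMap_ne_zero hQ)] at h1
    exact h1
  have hdvd : x.denom ∣ Q := by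
    have h2 : x.denom ∣ x.num * Q := ⟨P, by linear_combination key⟩
    exact ((RatFunc.isCoprime_num_denom x).symm).dvd_of_dvd_mul_left h2
  obtain ⟨c, hc⟩ := hdvd
  have hcne : c ≠ 0 := by rintro rfl; simp at hc; exact hQ (by simp [hc])
  have hPc : P = x.num * c := by
    have h2 := key
    rw [hc] at h2
    have h3 : x.denom * (x.num * c) = x.denom * P := by linear_combination h2
    exact (mul_left_cancel₀ hden h3).symm
  show φ _ / φ _ = _
  rw [div_eq_div_iff (RatFunc.algebraMap_ne_zero (pow_ne_zero 2 hden))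
    (RatFunc.algebraMap_ne_zero (pow_ne_zero 2 hQ)), ← map_mul, ← map_mul]
  congr 1
  rw [hPc, hc]
  simp only [derivative_mul]
  ring


lemma ratDeriv_add (x y : RatFunc K) : ratDeriv (x + y) = ratDeriv x + ratDeriv y := by
  have hdx := RatFunc.denom_ne_zero x
  have hdy := RatFunc.denom_ne_zero y
  have hxy : x + y = φ (x.num * y.denom + x.denom * y.num) / φ (x.denom * y.denom) := by
    conv_lhs => rw [← RatFunc.num_div_denom x, ← RatFunc.num_div_denom y]
    rw [pdiv_add_pdiv _ _ _ _ hdx hdy, mul_comm x.denom y.num]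
  rw [hxy, ratDeriv_div _ _ (mul_ne_zero hdx hdy)]
  show _ = φ _ / φ _ + φ _ / φ _
  rw [pdiv_add_pdiv _ _ _ _ (pow_ne_zero 2 hdx) (pow_ne_zero 2 hdy)]
  apply pdiv_eq_pdiv (pow_ne_zero 2 (mul_ne_zero hdx hdy))
    (mul_ne_zero (pow_ne_zero 2 hdx) (pow_ne_zero 2 hdy))
  simp only [derivative_mul, derivative_add]
  ring

variable {m : ℕ}

noncomputable def val (r : Polynomial K) (f : Fin m → Polynomial K) (n : ℕ) :
    Fin m → RatFunc K := fun i => φ (f i) / (φ r) ^ n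

lemma val_zero (r : Polynomial K) (n : ℕ) : val r (0 : Fin m → Polynomial K) n = 0 := by
  funext i; simp [val]

lemma val_eq_val {r : Polynomial K} (hr : r ≠ 0) {f g : Fin m → Polynomial K} {n p : ℕ}
    (h : ∀ i, f i * r ^ p = g i * r ^ n) : val r f n = val r g p := by
  funext i
  rw [val, val, div_eq_div_iff (pow_ne_zero n (RatFunc.algebraMap_ne_zero hr))
    (pow_ne_zero p (RatFunc.algebraMap_ne_zero hr)), ← map_pow, ← map_pow, ← map_mul, ← map_mul,
    h i]

lemma val_add {r : Polynomial K} (hr : r ≠ 0) (f g : Fin m → Polynomial K) (n p : ℕ) :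
    val r f n + val r g p = val r (fun i => f i * r ^ p + g i * r ^ n) (n + p) := by
  funext i
  show φ (f i) / (φ r) ^ n + φ (g i) / (φ r) ^ p = _
  rw [val, div_add_div _ _ (pow_ne_zero n (RatFunc.algebraMap_ne_zero hr))
    (pow_ne_zero p (RatFunc.algebraMap_ne_zero hr)), map_add, map_mul, map_mul, map_pow, map_pow,
    pow_add]
  ring_nf

lemma val_apply (r : Polynomial K) (F : Fin m → Polynomial K) (N : ℕ) (i : Fin m) :
    val r F N i = φ (F i) / (φ r) ^ N := rfl

lemma inA_val {r : Polynomial K} (f : Fin m → Polynomial K) (n : ℕ) (i : Fin m) :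
    inA r (val r f n i) := ⟨f i, n, rfl⟩

lemma nabla_add (r : Polynomial K) (b : Matrix (Fin m) (Fin m) (Polynomial K))
    (v w : Fin m → RatFunc K) :
    nabla m r b (v + w) = nabla m r b v + nabla m r b w := by
  funext i
  simp only [nabla, Pi.add_apply, ratDeriv_add, Matrix.mulVec_add]
  ring

/-- The numerator of `∇(f/rⁿ)` over `r^(n+1)`. -/
noncomputable def nablaF (r : Polynomial K) (b : Matrix (Fin m) (Fin m) (Polynomial K))
    (f : Fin m → Polynomial K) (n : ℕ) : Fin m → Polynomial K :=
  fun i => r * derivative (f i) - C (n : K) * derivative r * f i + ∑ j, b i j * f j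

lemma nabla_val {r : Polynomial K} (hr : r ≠ 0) (b : Matrix (Fin m) (Fin m) (Polynomial K))
    (f : Fin m → Polynomial K) (n : ℕ) :
    nabla m r b (val r f n) = val r (nablaF r b f n) (n + 1) := by
  funext i
  have hrn : (r : Polynomial K) ^ n ≠ 0 := pow_ne_zero _ hr
  have hφr : φ r ≠ 0 := RatFunc.algebraMap_ne_zero hr
  have hderiv : ratDeriv (val r f n i) =
      φ (r * derivative (f i) - C (n : K) * derivative r * f i) / (φ r) ^ (n + 1) := by
    rw [val, ← map_pow, ratDeriv_div _ _ hrn, ← map_pow]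
    apply pdiv_eq_pdiv (pow_ne_zero 2 hrn) (pow_ne_zero (n+1) hr)
    rw [derivative_pow]
    cases n with
    | zero => simp [mul_comm]
    | succ k =>
      simp only [Nat.add_sub_cancel, pow_succ]
      ring
  have hmv : ((Matrix.of fun i j => φ (b i j) / φ r).mulVec (val r f n)) i =
      φ (∑ j, b i j * f j) / (φ r) ^ (n + 1) := by
    rw [map_sum, Finset.sum_div]
    simp only [Matrix.mulVec, dotProduct, Matrix.of_apply, val]
    congr 1
    funext j
    rw [map_mul, div_mul_div_comm, pow_succ]
    ring
  show ratDeriv (val r f n i) + _ = _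
  rw [hderiv, hmv, val, nablaF, ← add_div, ← map_add]


lemma sum_C_coeff (p : Polynomial K) (n : ℕ) (h : p.degree < (n : WithBot ℕ)) :
    ∑ i ∈ Finset.range n, C (p.coeff i) * X ^ i = p := by
  by_cases hp : p = 0
  · subst hp; simp
  conv_rhs => rw [p.as_sum_range_C_mul_X_pow]
  symm
  apply Finset.sum_subset
  · intro i hi
    simp only [Finset.mem_range] at hi ⊢
    have := (natDegree_lt_iff_degree_lt hp).mpr h
    omega
  · intro i _ hi
    simp only [Finset.mem_range, not_lt] at hi
    rw [coeff_eq_zero_of_natDegree_lt (by omega), map_zero, zero_mul]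

lemma val_mem_span {W : Submodule K (Fin m → RatFunc K)} {r : Polynomial K} {n j : ℕ}
    (hW : ∀ (k : Fin m) (i : ℕ), i < n → Pi.single k (φ (X ^ i) / (φ r) ^ j) ∈ W)
    (s : Fin m → Polynomial K) (hs : ∀ i, (s i).degree < (n : WithBot ℕ)) :
    val r s j ∈ W := by
  have hval : val r s j = ∑ k : Fin m, ∑ i ∈ Finset.range n,
      ((s k).coeff i) • (Pi.single k (φ (X ^ i) / (φ r) ^ j) : Fin m → RatFunc K) := by
    funext l
    simp only [Finset.sum_apply, Pi.smul_apply, Pi.single_apply]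
    rw [Finset.sum_eq_single l]
    · simp only [if_pos rfl, eq_self_iff_true, if_true]
      show φ (s l) / (φ r) ^ j = _
      conv_lhs => rw [← sum_C_coeff (s l) n (hs l)]
      rw [map_sum, Finset.sum_div]
      apply Finset.sum_congr rfl
      intro i _
      rw [map_mul, RatFunc.algebraMap_C, ← RatFunc.smul_eq_C_mul, smul_div_assoc]
    · intro k _ hk
      simp [Ne.symm hk]
    · intro h
      exact absurd (Finset.mem_univ l) h
  rw [hval]
  exact Submodule.sum_mem _ fun k _ => Submodule.sum_mem _ fun i hi =>
    Submodule.smul_mem _ _ (hW k i (Finset.mem_range.mp hi))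

lemma coeff_mul_top {p q : Polynomial K} {dp dq : ℕ}
    (hp : p.degree ≤ (dp : WithBot ℕ)) (hq : q.degree ≤ (dq : WithBot ℕ)) :
    (p * q).coeff (dp + dq) = p.coeff dp * q.coeff dq := by
  rw [coeff_mul]
  apply Finset.sum_eq_single (dp, dq)
  · rintro ⟨a, c⟩ hac hne
    rw [Finset.HasAntidiagonal.mem_antidiagonal] at hac
    rcases lt_or_ge dp a with h | h
    · rw [coeff_eq_zero_of_degree_lt (lt_of_le_of_lt hp (by exact_mod_cast h)), zero_mul]
    · have hc : dq < c := by
        rcases lt_or_eq_of_le h with h' | h'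
        · omega
        · exact absurd (by simp [h']; omega : (a, c) = (dp, dq)) hne
      rw [coeff_eq_zero_of_degree_lt (lt_of_le_of_lt hq (by exact_mod_cast hc)), mul_zero]
  · intro h
    exact absurd (by simp : (dp, dq) ∈ Finset.HasAntidiagonal.antidiagonal (dp + dq)) h


lemma det_inf_ne_zero {d ρ : ℕ} (b : Matrix (Fin m) (Fin m) (Polynomial K))
    (hinf : ∀ n : ℤ,
      ((n : AlgebraicClosure K) • (1 : Matrix (Fin m) (Fin m) (AlgebraicClosure K))
        + b.map (fun q => algebraMap K (AlgebraicClosure K) (q.coeff (d - 1)))).det = 0 →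
      n < (ρ : ℤ)) {s : ℕ} (hs : ρ ≤ s) :
    ((s : K) • (1 : Matrix (Fin m) (Fin m) K)
      + Matrix.of (fun i j => (b i j).coeff (d - 1))).det ≠ 0 := by
  intro h0
  set f := algebraMap K (AlgebraicClosure K)
  have hmap : (((s : K) • (1 : Matrix (Fin m) (Fin m) K)
      + Matrix.of (fun i j => (b i j).coeff (d - 1))).map f)
      = (((s : ℤ) : AlgebraicClosure K) • (1 : Matrix (Fin m) (Fin m) (AlgebraicClosure K))
        + b.map (fun q => algebraMap K (AlgebraicClosure K) (q.coeff (d - 1)))) := by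
    ext i j
    simp only [Matrix.map_apply, Matrix.add_apply, Matrix.smul_apply, Matrix.one_apply,
      Matrix.of_apply, map_add, map_mul, smul_eq_mul]
    rw [apply_ite f, map_one, map_zero, map_natCast]
    push_cast
    ring
  have := hinf (s : ℤ)
    (by rw [← hmap, ← RingHom.mapMatrix_apply, ← RingHom.map_det, h0, map_zero])
  omega

lemma coprime_det [CharZero K] {ρ : ℕ} {r : Polynomial K} (hmonic : r.Monic)
    (hsf : Squarefree r)
    (b : Matrix (Fin m) (Fin m) (Polynomial K))
    (hfin : ∀ (n : ℤ) (γ : AlgebraicClosure K), aeval γ r = 0 →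
      ((n : AlgebraicClosure K) • (1 : Matrix (Fin m) (Fin m) (AlgebraicClosure K))
        - (aeval γ (derivative r))⁻¹ • b.map (fun q => aeval γ q)).det = 0 → n < (ρ : ℤ))
    {n : ℕ} (hn : ρ ≤ n) :
    IsCoprime ((b - (C (n : K) * derivative r) •
      (1 : Matrix (Fin m) (Fin m) (Polynomial K))).det) r := by
  classical
  set M := b - (C (n : K) * derivative r) • (1 : Matrix (Fin m) (Fin m) (Polynomial K)) with hM
  by_contra hnc
  have hg1 : ¬IsUnit (EuclideanDomain.gcd M.det r) := fun h => hnc (EuclideanDomain.gcd_isUnit_iff.mp h)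
  set g := EuclideanDomain.gcd M.det r with hgdef
  have hgr : g ∣ r := EuclideanDomain.gcd_dvd_right _ _
  have hgq : g ∣ M.det := EuclideanDomain.gcd_dvd_left _ _
  have hg0 : g ≠ 0 := by
    intro h
    rw [hgdef, EuclideanDomain.gcd_eq_zero_iff] at h
    exact hmonic.ne_zero h.2
  have hdeg0 : g.degree ≠ 0 := fun h => hg1 (isUnit_iff_degree_eq_zero.mpr h)
  have hdegm : (g.map (algebraMap K (AlgebraicClosure K))).degree ≠ 0 := by
    rwa [degree_map_eq_of_injective (algebraMap K (AlgebraicClosure K)).injective]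
  obtain ⟨γ, hγ⟩ := IsAlgClosed.exists_root _ hdegm
  have hγg : aeval γ g = 0 := by
    rwa [IsRoot, eval_map, ← aeval_def] at hγ
  have hγr : aeval γ r = 0 := by
    obtain ⟨t, ht⟩ := hgr
    rw [ht, map_mul, hγg, zero_mul]
  have hγq : aeval γ M.det = 0 := by
    obtain ⟨t, ht⟩ := hgq
    rw [ht, map_mul, hγg, zero_mul]
  set c := aeval γ (derivative r) with hc
  have hcne : c ≠ 0 := by
    have hsep : r.Separable := (PerfectField.separable_iff_squarefree).mpr hsf
    obtain ⟨a, b', hab⟩ := hsep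
    intro h
    have := congrArg (aeval γ) hab
    simp only [map_add, map_mul, map_one, hγr, ← hc, h, mul_zero, add_zero] at this
    exact one_ne_zero this.symm
  have h1 : ((b.map (aeval γ)) - ((n : AlgebraicClosure K) * c) •
      (1 : Matrix (Fin m) (Fin m) (AlgebraicClosure K))).det = 0 := by
    have hmap : M.map ((aeval γ : Polynomial K →ₐ[K] AlgebraicClosure K) : Polynomial K →+* AlgebraicClosure K)
        = (b.map (aeval γ)) - ((n : AlgebraicClosure K) * c) • 1 := by
      ext i j
      simp only [Matrix.map_apply, Matrix.sub_apply, Matrix.smul_apply, Matrix.one_apply,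
        smul_eq_mul, map_sub, map_mul, AlgHom.coe_toRingHom, hM]
      rw [apply_ite (aeval γ), map_one, map_zero, aeval_C, map_natCast]
    rw [← hmap, ← RingHom.mapMatrix_apply, ← RingHom.map_det]
    exact hγq
  have h2 : (((n : ℤ) : AlgebraicClosure K) • (1 : Matrix (Fin m) (Fin m) (AlgebraicClosure K))
      - (aeval γ (derivative r))⁻¹ • b.map (fun q => aeval γ q)).det = 0 := by
    have heq : (((n : ℤ) : AlgebraicClosure K) • (1 : Matrix (Fin m) (Fin m) (AlgebraicClosure K))
        - (aeval γ (derivative r))⁻¹ • b.map (fun q => aeval γ q))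
        = (-c⁻¹) • ((b.map (aeval γ)) - ((n : AlgebraicClosure K) * c) • 1) := by
      ext i j
      by_cases hij : i = j
      · simp only [Matrix.sub_apply, Matrix.smul_apply, Matrix.one_apply, smul_eq_mul, ← hc,
          Matrix.map_apply, if_pos hij]
        push_cast
        field_simp
        ring
      · simp only [Matrix.sub_apply, Matrix.smul_apply, Matrix.one_apply, smul_eq_mul, ← hc,
          Matrix.map_apply, if_neg hij]
        ring
    rw [heq, Matrix.det_smul, h1, mul_zero]
  have := hfin (n : ℤ) γ hγr h2
  omega

lemma solve_mod {r : Polynomial K} (b : Matrix (Fin m) (Fin m) (Polynomial K)) (n : ℕ)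
    (hcop : IsCoprime ((b - (C (n : K) * derivative r) •
      (1 : Matrix (Fin m) (Fin m) (Polynomial K))).det) r)
    (s : Fin m → Polynomial K) :
    ∃ g h : Fin m → Polynomial K, ∀ i,
      (∑ j, b i j * g j) - C (n : K) * derivative r * g i = s i - r * h i := by
  classical
  obtain ⟨a, e, hae⟩ := hcop
  set M := b - (C (n : K) * derivative r) • (1 : Matrix (Fin m) (Fin m) (Polynomial K)) with hM
  refine ⟨a • (M.adjugate.mulVec s), fun i => e * s i, fun i => ?_⟩
  have key : (M.mulVec (a • (M.adjugate.mulVec s))) i = a * M.det * s i := by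
    rw [Matrix.mulVec_smul, Matrix.mulVec_mulVec, Matrix.mul_adjugate,
      Matrix.smul_mulVec, Matrix.one_mulVec]
    simp only [Pi.smul_apply, smul_eq_mul]
    ring
  have hlhs : (M.mulVec (a • (M.adjugate.mulVec s))) i
      = (∑ j, b i j * (a • (M.adjugate.mulVec s)) j)
        - C (n : K) * derivative r * (a • (M.adjugate.mulVec s)) i := by
    simp only [Matrix.mulVec, dotProduct, hM, Matrix.sub_apply, Matrix.smul_apply,
      Matrix.one_apply, smul_eq_mul, sub_mul, mul_ite, ite_mul, mul_one, mul_zero, zero_mul,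
      Finset.sum_sub_distrib, Finset.sum_ite_eq, Finset.mem_univ, if_true]
  rw [← hlhs, key]
  linear_combination (s i) * hae


lemma ratDeriv_zero : ratDeriv (0 : RatFunc K) = 0 := by
  simp [ratDeriv]

lemma nabla_zero (r : Polynomial K) (b : Matrix (Fin m) (Fin m) (Polynomial K)) :
    nabla m r b 0 = 0 := by
  funext i
  simp [nabla, ratDeriv_zero, Matrix.mulVec_zero]

/-- A polynomial vector viewed in `RatFunc`. -/
noncomputable def mp (G : Fin m → Polynomial K) : Fin m → RatFunc K := fun i => φ (G i)

lemma val_zero_eq (r : Polynomial K) (G : Fin m → Polynomial K) : val r G 0 = mp G := by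
  funext i; simp [val, mp]

lemma mp_mem_span {W : Submodule K (Fin m → RatFunc K)} {n : ℕ}
    (hW : ∀ (k : Fin m) (i : ℕ), i < n → Pi.single k (φ (X ^ i)) ∈ W)
    (s : Fin m → Polynomial K) (hs : ∀ i, (s i).degree < (n : WithBot ℕ)) :
    mp s ∈ W := by
  have hval : mp s = ∑ k : Fin m, ∑ i ∈ Finset.range n,
      ((s k).coeff i) • (Pi.single k (φ (X ^ i)) : Fin m → RatFunc K) := by
    funext l
    simp only [Finset.sum_apply, Pi.smul_apply, Pi.single_apply]
    rw [Finset.sum_eq_single l]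
    · simp only [if_pos rfl, eq_self_iff_true, if_true]
      show φ (s l) = _
      conv_lhs => rw [← sum_C_coeff (s l) n (hs l)]
      rw [map_sum]
      apply Finset.sum_congr rfl
      intro i _
      rw [map_mul, RatFunc.algebraMap_C, ← RatFunc.smul_eq_C_mul]
    · intro k _ hk
      simp [Ne.symm hk]
    · intro h
      exact absurd (Finset.mem_univ l) h
  rw [hval]
  exact Submodule.sum_mem _ fun k _ => Submodule.sum_mem _ fun i hi =>
    Submodule.smul_mem _ _ (hW k i (Finset.mem_range.mp hi))

lemma claim2 [CharZero K] {d ρ : ℕ} (hd : 1 ≤ d) (hρ : 1 ≤ ρ) {r : Polynomial K}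
    (hmonic : r.Monic) (hdeg : r.natDegree = d)
    (b : Matrix (Fin m) (Fin m) (Polynomial K))
    (hb : ∀ i j, (b i j).degree ≤ ((d - 1 : ℕ) : WithBot ℕ))
    (hinf : ∀ n : ℤ,
      ((n : AlgebraicClosure K) • (1 : Matrix (Fin m) (Fin m) (AlgebraicClosure K))
        + b.map (fun q => algebraMap K (AlgebraicClosure K) (q.coeff (d - 1)))).det = 0 →
      n < (ρ : ℤ))
    {W : Submodule K (Fin m → RatFunc K)}
    (hW1 : ∀ (k : Fin m) (i j : ℕ), i < d → 1 ≤ j → j ≤ ρ →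
      Pi.single k (φ (X ^ i) / (φ r) ^ j) ∈ W)
    (hW2 : ∀ (k : Fin m) (i : ℕ), i + 2 ≤ ρ → Pi.single k (φ (X ^ i)) ∈ W) :
    ∀ t : ℕ, ∀ G : Fin m → Polynomial K,
      (∀ i, (G i).degree < ((ρ - 1 + t : ℕ) : WithBot ℕ)) →
      ∃ F : Fin m → Polynomial K, mp G - nabla m r b (val r F 0) ∈ W := by
  have hr0 : r ≠ 0 := hmonic.ne_zero
  have hdegr : r.degree = (d : WithBot ℕ) := by
    rw [degree_eq_natDegree hr0, hdeg]
  intro t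
  induction t with
  | zero =>
    intro G hG
    refine ⟨0, ?_⟩
    rw [val_zero (r := r), nabla_zero, sub_zero]
    exact mp_mem_span (n := ρ - 1 + 0) (fun k i hi => hW2 k i (by omega)) G hG
  | succ t ih =>
    intro G hG
    set s := ρ - 1 + t with hsdef
    set c : Fin m → K := fun i => (G i).coeff s with hcdef
    set M : Matrix (Fin m) (Fin m) K :=
      (((s + 1 : ℕ) : K)) • 1 + Matrix.of (fun i j => (b i j).coeff (d - 1)) with hMdef
    have hdet : M.det ≠ 0 := det_inf_ne_zero b hinf (by omega)
    set w : Fin m → K := M⁻¹.mulVec c with hwdef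
    have hMw : M.mulVec w = c := by
      rw [hwdef, Matrix.mulVec_mulVec, Matrix.mul_nonsing_inv _ (isUnit_iff_ne_zero.mpr hdet),
        Matrix.one_mulVec]
    set P : Fin m → Polynomial K := fun i => C (w i) * X ^ (s + 1) with hPdef
    set H : Fin m → Polynomial K := nablaF r b P 0 with hHdef
    have hnP : nabla m r b (val r P 0) = val r H 1 := nabla_val hr0 b P 0
    have hDP : ∀ i, derivative (P i) = C (w i * ((s + 1 : ℕ) : K)) * X ^ s := by
      intro i
      show derivative (C (w i) * X ^ (s + 1)) = _
      rw [derivative_C_mul, derivative_X_pow, Nat.add_sub_cancel, ← mul_assoc, ← C_mul]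
    have hHi : ∀ i, H i = r * derivative (P i) + ∑ j, b i j * P j := by
      intro i
      show nablaF r b P 0 i = _
      simp only [nablaF, Nat.cast_zero, map_zero, zero_mul, sub_zero]
    have hPdeg : ∀ j, (P j).degree ≤ ((s + 1 : ℕ) : WithBot ℕ) := by
      intro j; rw [hPdef]; exact degree_C_mul_X_pow_le _ _
    have hcast : ((d - 1 : ℕ) : WithBot ℕ) + ((s + 1 : ℕ) : WithBot ℕ)
        = ((d + s : ℕ) : WithBot ℕ) := by
      rw [← Nat.cast_add]; congr 1; omega
    have hHdeg : ∀ i, (H i).degree ≤ ((d + s : ℕ) : WithBot ℕ) := by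
      intro i
      rw [hHi i]
      apply le_trans (degree_add_le _ _)
      apply max_le
      · apply le_trans (degree_mul_le _ _)
        have h1 : (derivative (P i)).degree ≤ (s : WithBot ℕ) := by
          rw [hDP i]; exact degree_C_mul_X_pow_le _ _
        calc r.degree + (derivative (P i)).degree ≤ (d : WithBot ℕ) + (s : WithBot ℕ) :=
              add_le_add (le_of_eq hdegr) h1
          _ = ((d + s : ℕ) : WithBot ℕ) := (Nat.cast_add d s).symm
      · apply le_trans (degree_sum_le _ _)
        apply Finset.sup_le
        intro j _
        apply le_trans (degree_mul_le _ _)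
        rw [← hcast]
        exact add_le_add (hb i j) (hPdeg j)
    set Q : Fin m → Polynomial K := fun i => H i /ₘ r with hQdef
    set S : Fin m → Polynomial K := fun i => H i %ₘ r with hSdef
    have hHQS : ∀ i, H i = r * Q i + S i := by
      intro i
      rw [hQdef, hSdef]
      have := modByMonic_add_div (H i) r
      linear_combination this.symm
    have hSdeg : ∀ i, (S i).degree < (d : WithBot ℕ) := by
      intro i
      rw [← hdegr]
      exact degree_modByMonic_lt _ hmonic
    have hQdeg : ∀ i, (Q i).degree ≤ (s : WithBot ℕ) := by
      intro i
      rw [← natDegree_le_iff_degree_le]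
      have h1 : (H i /ₘ r).natDegree = (H i).natDegree - r.natDegree :=
        natDegree_divByMonic _ hmonic
      have h2 : (H i).natDegree ≤ d + s := natDegree_le_iff_degree_le.mpr (hHdeg i)
      rw [hQdef]; rw [h1, hdeg]; omega
    have hQcoeff : ∀ i, (Q i).coeff s = c i := by
      intro i
      have hHc : (H i).coeff (d + s) = (Q i).coeff s := by
        rw [hHQS i]
        rw [coeff_add, coeff_eq_zero_of_degree_lt
          (lt_of_lt_of_le (hSdeg i) (by exact_mod_cast Nat.le_add_right d s)), add_zero]
        rw [coeff_mul_top (le_of_eq hdegr) (hQdeg i)]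
        have : r.coeff d = 1 := by
          have := hmonic.coeff_natDegree
          rwa [hdeg] at this
        rw [this, one_mul]
      have hHc2 : (H i).coeff (d + s) = (M.mulVec w) i := by
        rw [hHi i, coeff_add, finset_sum_coeff]
        rw [coeff_mul_top (le_of_eq hdegr) (by rw [hDP i]; exact degree_C_mul_X_pow_le _ _)]
        have hr1 : r.coeff d = 1 := by
          have := hmonic.coeff_natDegree
          rwa [hdeg] at this
        have hterm : ∀ j, (b i j * P j).coeff (d + s) = (b i j).coeff (d - 1) * w j := by
          intro j
          have hds : d + s = (d - 1) + (s + 1) := by omega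
          rw [hds, coeff_mul_top (hb i j) (hPdeg j), hPdef]
          simp [coeff_C_mul, coeff_X_pow]
        rw [Finset.sum_congr rfl (fun j _ => hterm j), hr1, one_mul]
        have : (M.mulVec w) i = ((s + 1 : ℕ) : K) * w i
            + ∑ j, (b i j).coeff (d - 1) * w j := by
          simp only [Matrix.mulVec, dotProduct, hMdef, Matrix.add_apply,
            Matrix.smul_apply, Matrix.one_apply, Matrix.of_apply, smul_eq_mul, add_mul,
            mul_ite, ite_mul, mul_one, mul_zero, zero_mul, Finset.sum_add_distrib,
            Finset.sum_ite_eq, Finset.mem_univ, if_true]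
        rw [this, hDP i, coeff_C_mul, coeff_X_pow, if_pos rfl, mul_one]
        ring
      rw [← hHc, hHc2, hMw]
    have hG' : ∀ i, ((fun i => G i - Q i) i).degree < (s : WithBot ℕ) := by
      intro i
      rw [degree_lt_iff_coeff_zero]
      intro k hk
      have hks : s ≤ k := by exact_mod_cast hk
      rw [coeff_sub]
      rcases eq_or_lt_of_le hks with h | h
      · rw [← h, hQcoeff i, hcdef]
        exact sub_self _
      · rw [coeff_eq_zero_of_degree_lt (lt_of_lt_of_le (hG i)
            (by exact_mod_cast (show ρ - 1 + (t + 1) ≤ k by omega))),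
          coeff_eq_zero_of_degree_lt (lt_of_le_of_lt (hQdeg i) (by exact_mod_cast h)),
          sub_zero]
    obtain ⟨F', hF'⟩ := ih (fun i => G i - Q i) hG'
    refine ⟨fun i => F' i + P i, ?_⟩
    have hvadd : val r (fun i => F' i + P i) 0 = val r F' 0 + val r P 0 := by
      funext i
      simp [val, map_add, add_div]
    have hval1 : val r H 1 = mp Q + val r S 1 := by
      funext i
      show φ (H i) / (φ r) ^ 1 = φ (Q i) + φ (S i) / (φ r) ^ 1
      rw [pow_one, hHQS i, map_add, map_mul, add_div,
        mul_div_cancel_left₀ _ (RatFunc.algebraMap_ne_zero hr0)]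
    rw [hvadd, nabla_add, hnP, hval1]
    have hmpsub : mp (fun i => G i - Q i) = mp G - mp Q := by
      funext i; simp [mp, map_sub]
    have hrearr : mp G - (nabla m r b (val r F' 0) + (mp Q + val r S 1))
        = (mp (fun i => G i - Q i) - nabla m r b (val r F' 0)) + (-(val r S 1)) := by
      rw [hmpsub]; abel
    rw [hrearr]
    refine W.add_mem hF' (W.neg_mem ?_)
    exact val_mem_span (fun k i hi => hW1 k i 1 hi le_rfl hρ) S hSdeg


lemma claim1 [CharZero K] {d ρ : ℕ} (hρ : 1 ≤ ρ) {r : Polynomial K}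
    (hmonic : r.Monic) (hsf : Squarefree r) (hdeg : r.natDegree = d)
    (b : Matrix (Fin m) (Fin m) (Polynomial K))
    (hfin : ∀ (n : ℤ) (γ : AlgebraicClosure K), aeval γ r = 0 →
      ((n : AlgebraicClosure K) • (1 : Matrix (Fin m) (Fin m) (AlgebraicClosure K))
        - (aeval γ (derivative r))⁻¹ • b.map (fun q => aeval γ q)).det = 0 → n < (ρ : ℤ))
    {W : Submodule K (Fin m → RatFunc K)}
    (hW1 : ∀ (k : Fin m) (i j : ℕ), i < d → 1 ≤ j → j ≤ ρ →
      Pi.single k (φ (X ^ i) / (φ r) ^ j) ∈ W) :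
    ∀ n : ℕ, ∀ f : Fin m → Polynomial K,
      ∃ (F : Fin m → Polynomial K) (N : ℕ) (G : Fin m → Polynomial K),
        val r f n - nabla m r b (val r F N) - mp G ∈ W := by
  have hr0 : r ≠ 0 := hmonic.ne_zero
  have hdegr : r.degree = (d : WithBot ℕ) := by
    rw [degree_eq_natDegree hr0, hdeg]
  intro n
  induction n with
  | zero =>
    intro f
    refine ⟨0, 0, f, ?_⟩
    rw [val_zero (r := r), nabla_zero, val_zero_eq, sub_zero, sub_self]
    exact W.zero_mem
  | succ n ih =>
    intro f
    set q : Fin m → Polynomial K := fun i => f i /ₘ r with hq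
    set s : Fin m → Polynomial K := fun i => f i %ₘ r with hs
    have hfi : ∀ i, s i + r * q i = f i := fun i => modByMonic_add_div (f i) r
    have hsplit : val r f (n + 1) = val r q n + val r s (n + 1) := by
      rw [val_add hr0]
      apply val_eq_val hr0
      intro i
      linear_combination (r ^ (n + (n + 1))) * (hfi i).symm
    obtain ⟨F₁, N₁, G₁, h₁⟩ := ih q
    by_cases hcase : n + 1 ≤ ρ
    · refine ⟨F₁, N₁, G₁, ?_⟩
      have hsdeg : ∀ i, (s i).degree < (d : WithBot ℕ) := by
        intro i; rw [← hdegr]; exact degree_modByMonic_lt _ hmonic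
      have hsS : val r s (n + 1) ∈ W :=
        val_mem_span (fun k i hi => hW1 k i (n + 1) hi (by omega) hcase) s hsdeg
      have hre : val r f (n + 1) - nabla m r b (val r F₁ N₁) - mp G₁
          = (val r q n - nabla m r b (val r F₁ N₁) - mp G₁) + val r s (n + 1) := by
        rw [hsplit]; abel
      rw [hre]
      exact W.add_mem h₁ hsS
    · have hρn : ρ ≤ n := by omega
      have hcop := coprime_det hmonic hsf b hfin hρn
      obtain ⟨g, h, hgh⟩ := solve_mod b n hcop s
      have hkey : val r s (n + 1)
          = nabla m r b (val r g n) + val r (fun i => h i - derivative (g i)) n := by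
        rw [nabla_val hr0, val_add hr0]
        apply val_eq_val hr0
        intro i
        have hi := hgh i
        show s i * r ^ ((n + 1) + n) = (nablaF r b g n i * r ^ n
          + (h i - derivative (g i)) * r ^ (n + 1)) * r ^ (n + 1)
        rw [show nablaF r b g n i = r * derivative (g i) - C (n : K) * derivative r * g i
          + ∑ j, b i j * g j from rfl]
        linear_combination (-(r ^ (n + 1) * r ^ n)) * hi
      obtain ⟨F₂, N₂, G₂, h₂⟩ := ih (fun i => h i - derivative (g i))
      set Fc : Fin m → Polynomial K :=
        fun i => (F₁ i * r ^ n + g i * r ^ N₁) * r ^ N₂ + F₂ i * r ^ (N₁ + n) with hFc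
      have hVc : val r F₁ N₁ + val r g n + val r F₂ N₂ = val r Fc (N₁ + n + N₂) := by
        rw [val_add hr0 F₁ g N₁ n, val_add hr0 _ F₂ (N₁ + n) N₂]
      refine ⟨Fc, N₁ + n + N₂, fun i => G₁ i + G₂ i, ?_⟩
      have hmpG : mp (fun i => G₁ i + G₂ i) = mp G₁ + mp G₂ := by
        funext i; simp [mp, map_add]
      rw [← hVc, nabla_add, nabla_add, hmpG]
      have hre : val r f (n + 1) - (nabla m r b (val r F₁ N₁) + nabla m r b (val r g n)
            + nabla m r b (val r F₂ N₂)) - (mp G₁ + mp G₂)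
          = (val r q n - nabla m r b (val r F₁ N₁) - mp G₁)
            + (val r (fun i => h i - derivative (g i)) n - nabla m r b (val r F₂ N₂) - mp G₂) := by
        rw [hsplit, hkey]; abel
      rw [hre]
      exact W.add_mem h₁ h₂

end Stmt3Aux

open Stmt3Aux

/-- Theorem `Thm-FGEdR`: with `∇ = d/dΓ + b/r` on `A^m`, `A = K[Γ,1/r]`,
`r` monic squarefree of degree `d`, `deg b ≤ d-1`, and `ρ` a positive integer greater than
every integer eigenvalue of `b(γ)/r'(γ)` at each root `γ` of `r` and greater than every
integer eigenvalue of `-b_{d-1}`, the cokernel of `∇ : A^m → A^m dΓ` is spanned over `K`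
by the images of the forms `e_k·(Γ^i/r^j) dΓ` (`0 ≤ i < d`, `1 ≤ j ≤ ρ`) and
`e_k·Γ^j dΓ` (`0 ≤ j ≤ ρ-2`). -/
theorem stmt3 {K : Type*} [Field K] [CharZero K] (m d ρ : ℕ) (hd : 1 ≤ d) (hρ : 1 ≤ ρ)
    (r : Polynomial K) (hmonic : r.Monic) (hsf : Squarefree r) (hdeg : r.natDegree = d)
    (b : Matrix (Fin m) (Fin m) (Polynomial K)) (hb : ∀ i j, (b i j).degree ≤ (d - 1 : ℕ))
    (hfin : ∀ (n : ℤ) (γ : AlgebraicClosure K), aeval γ r = 0 →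
      ((n : AlgebraicClosure K) • (1 : Matrix (Fin m) (Fin m) (AlgebraicClosure K))
        - (aeval γ (derivative r))⁻¹ • b.map (fun q => aeval γ q)).det = 0 → n < (ρ : ℤ))
    (hinf : ∀ n : ℤ,
      ((n : AlgebraicClosure K) • (1 : Matrix (Fin m) (Fin m) (AlgebraicClosure K))
        + b.map (fun q => algebraMap K (AlgebraicClosure K) (q.coeff (d - 1)))).det = 0 →
      n < (ρ : ℤ)) :
    ∀ u : Fin m → RatFunc K, (∀ i, inA r (u i)) →
      ∃ v : Fin m → RatFunc K, (∀ i, inA r (v i)) ∧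
        u - nabla m r b v ∈ Submodule.span K
          {w : Fin m → RatFunc K |
            (∃ (k : Fin m) (i j : ℕ), i < d ∧ 1 ≤ j ∧ j ≤ ρ ∧
              w = Pi.single k (algebraMap (Polynomial K) (RatFunc K) (X ^ i) /
                (algebraMap (Polynomial K) (RatFunc K) r) ^ j)) ∨
            (∃ (k : Fin m) (j : ℕ), j + 2 ≤ ρ ∧
              w = Pi.single k (algebraMap (Polynomial K) (RatFunc K) (X ^ j)))} := by
  classical
  intro u hu
  set W : Submodule K (Fin m → RatFunc K) := Submodule.span K
          {w : Fin m → RatFunc K |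
            (∃ (k : Fin m) (i j : ℕ), i < d ∧ 1 ≤ j ∧ j ≤ ρ ∧
              w = Pi.single k (algebraMap (Polynomial K) (RatFunc K) (X ^ i) /
                (algebraMap (Polynomial K) (RatFunc K) r) ^ j)) ∨
            (∃ (k : Fin m) (j : ℕ), j + 2 ≤ ρ ∧
              w = Pi.single k (algebraMap (Polynomial K) (RatFunc K) (X ^ j)))} with hWdef
  have hW1 : ∀ (k : Fin m) (i j : ℕ), i < d → 1 ≤ j → j ≤ ρ →
      Pi.single k (algebraMap (Polynomial K) (RatFunc K) (X ^ i) /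
        (algebraMap (Polynomial K) (RatFunc K) r) ^ j) ∈ W :=
    fun k i j hi h1 h2 => Submodule.subset_span (Or.inl ⟨k, i, j, hi, h1, h2, rfl⟩)
  have hW2 : ∀ (k : Fin m) (j : ℕ), j + 2 ≤ ρ →
      Pi.single k (algebraMap (Polynomial K) (RatFunc K) (X ^ j)) ∈ W :=
    fun k j hj => Submodule.subset_span (Or.inr ⟨k, j, hj, rfl⟩)
  choose f nn hf using hu
  have hr0 : r ≠ 0 := hmonic.ne_zero
  have hu_eq : u = ∑ k : Fin m, val r (Pi.single k (f k)) (nn k) := by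
    funext l
    rw [Finset.sum_apply]
    rw [Finset.sum_eq_single l]
    · rw [val_apply, Pi.single_eq_same]
      exact hf l
    · intro k _ hk
      rw [val_apply, Pi.single_eq_of_ne (Ne.symm hk), map_zero, zero_div]
    · intro h; exact absurd (Finset.mem_univ l) h
  have key : ∀ k : Fin m, ∃ (F : Fin m → Polynomial K) (N : ℕ),
      val r (Pi.single k (f k)) (nn k) - nabla m r b (val r F N) ∈ W := by
    intro k
    obtain ⟨F₁, N₁, G, hG⟩ :=
      claim1 (d := d) hρ hmonic hsf hdeg b hfin hW1 (nn k) (Pi.single k (f k))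
    set T : ℕ := (Finset.univ.sup fun i => (G i).natDegree) + 1 with hT
    have hGdeg : ∀ i, (G i).degree < ((ρ - 1 + T : ℕ) : WithBot ℕ) := by
      intro i
      apply lt_of_le_of_lt (degree_le_natDegree)
      exact_mod_cast show (G i).natDegree < ρ - 1 + T by
        have h1 : (G i).natDegree ≤ Finset.univ.sup fun j => (G j).natDegree :=
          Finset.le_sup (f := fun j => (G j).natDegree) (Finset.mem_univ i)
        omega
    obtain ⟨F₂, hF₂⟩ := claim2 hd hρ hmonic hdeg b hb hinf hW1 hW2 T G hGdeg
    refine ⟨fun i => F₁ i * r ^ 0 + F₂ i * r ^ N₁, N₁ + 0, ?_⟩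
    rw [← val_add hr0 F₁ F₂ N₁ 0, nabla_add]
    have hre : val r (Pi.single k (f k)) (nn k)
          - (nabla m r b (val r F₁ N₁) + nabla m r b (val r F₂ 0))
        = (val r (Pi.single k (f k)) (nn k) - nabla m r b (val r F₁ N₁) - mp G)
          + (mp G - nabla m r b (val r F₂ 0)) := by abel
    rw [hre]
    exact W.add_mem hG hF₂
  choose Fv Nv hFv using key
  refine ⟨∑ k : Fin m, val r (Fv k) (Nv k), ?_, ?_⟩
  · have hsum : ∃ Fc Nc, (∑ k : Fin m, val r (Fv k) (Nv k)) = val r Fc Nc := by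
      refine Finset.sum_induction _ (fun v => ∃ Fc Nc, v = val r Fc Nc) ?_
        ⟨0, 0, (val_zero r 0).symm⟩ (fun k _ => ⟨Fv k, Nv k, rfl⟩)
      rintro x y ⟨Fx, Nx, rfl⟩ ⟨Fy, Ny, rfl⟩
      exact ⟨_, _, (val_add hr0 Fx Fy Nx Ny)⟩
    obtain ⟨Fc, Nc, hFc⟩ := hsum
    rw [hFc]
    intro i
    exact inA_val Fc Nc i
  · have hnab : nabla m r b (∑ k : Fin m, val r (Fv k) (Nv k))
        = ∑ k : Fin m, nabla m r b (val r (Fv k) (Nv k)) :=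
      map_sum (AddMonoidHom.mk' (nabla m r b) (nabla_add r b)) _ _
    rw [hu_eq, hnab, ← Finset.sum_sub_distrib]
    exact Submodule.sum_mem _ fun k _ => hFv k
end

section
/- Under the hypotheses of the preceding reduction theorem (∇ = d/dΓ + b/r with r monic squarefree of degree d, deg(b) ≤ d-1, and ρ exceeding all relevant integer exponents), the cokernel E := coker(∇ : A^m → A^m dΓ) with A = K[Γ, 1/r] is a finite-dimensional K-vector space. -/
open Polynomial

section AuxDefs

/-- `V g n = g / r^n` as a vector of rational functions. -/
noncomputable def Vv {K : Type*} [Field K] (m : ℕ) (r : Polynomial K)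
    (g : Fin m → Polynomial K) (n : ℕ) : Fin m → RatFunc K :=
  fun i => algebraMap (Polynomial K) (RatFunc K) (g i) /
    (algebraMap (Polynomial K) (RatFunc K) r) ^ n

/-- The numerator of `∇(g/r^n)` over `r^(n+1)`. -/
noncomputable def Phi {K : Type*} [Field K] (m : ℕ) (r : Polynomial K)
    (b : Matrix (Fin m) (Fin m) (Polynomial K)) (n : ℕ) (g : Fin m → Polynomial K) :
    Fin m → Polynomial K :=
  fun i => derivative (g i) * r - (n : Polynomial K) * derivative r * g i + b.mulVec g i

end AuxDefs

section Aux

variable {K : Type*} [Field K]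

lemma ratDeriv_div (p q : Polynomial K) (hq : q ≠ 0) :
    ratDeriv (algebraMap (Polynomial K) (RatFunc K) p / algebraMap (Polynomial K) (RatFunc K) q)
    = algebraMap (Polynomial K) (RatFunc K) (derivative p * q - p * derivative q) /
      algebraMap (Polynomial K) (RatFunc K) (q ^ 2) := by
  have hinj := RatFunc.algebraMap_injective K
  unfold ratDeriv
  set x := algebraMap (Polynomial K) (RatFunc K) p / algebraMap (Polynomial K) (RatFunc K) q with hx
  have hd0 : x.denom ≠ 0 := x.denom_ne_zero
  have hqr : algebraMap (Polynomial K) (RatFunc K) q ≠ 0 := by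
    simpa [map_eq_zero_iff _ hinj] using hq
  have hdr : algebraMap (Polynomial K) (RatFunc K) x.denom ≠ 0 := by
    simpa [map_eq_zero_iff _ hinj] using hd0
  have h1 : x.num * q = p * x.denom := by
    apply hinj
    have h := x.num_div_denom
    rw [hx] at h ⊢
    rw [div_eq_div_iff hdr hqr] at h
    simpa [map_mul] using h
  have h2 : derivative x.num * q + x.num * derivative q
      = derivative p * x.denom + p * derivative x.denom := by
    have := congrArg derivative h1
    simpa [derivative_mul] using this
  rw [div_eq_div_iff (by simpa [map_eq_zero_iff _ hinj] using pow_ne_zero 2 hd0)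
    (by simpa [map_eq_zero_iff _ hinj] using pow_ne_zero 2 hq)]
  rw [← map_mul, ← map_mul]
  congr 1
  linear_combination (x.denom * q) * h2 - (derivative x.denom * q + x.denom * derivative q) * h1

lemma nabla_Vv (m : ℕ) (r : Polynomial K) (hr : r ≠ 0)
    (b : Matrix (Fin m) (Fin m) (Polynomial K)) (g : Fin m → Polynomial K) (n : ℕ) :
    nabla m r b (Vv m r g n) = Vv m r (Phi m r b n g) (n + 1) := by
  have hinj := RatFunc.algebraMap_injective K
  have hR : algebraMap (Polynomial K) (RatFunc K) r ≠ 0 := by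
    simpa [map_eq_zero_iff _ hinj] using hr
  funext i
  have hsum : ((Matrix.of fun i j => algebraMap (Polynomial K) (RatFunc K) (b i j) /
        algebraMap (Polynomial K) (RatFunc K) r).mulVec (Vv m r g n)) i
      = algebraMap (Polynomial K) (RatFunc K) (b.mulVec g i) /
        (algebraMap (Polynomial K) (RatFunc K) r) ^ (n + 1) := by
    simp only [Matrix.mulVec, dotProduct, Matrix.of_apply, Vv]
    rw [map_sum, Finset.sum_div]
    refine Finset.sum_congr rfl fun j _ => ?_
    rw [map_mul, pow_succ, div_mul_div_comm]
    ring
  have hrd : ratDeriv (Vv m r g n i)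
      = algebraMap (Polynomial K) (RatFunc K)
          (derivative (g i) * r - (n : Polynomial K) * derivative r * g i) /
        (algebraMap (Polynomial K) (RatFunc K) r) ^ (n + 1) := by
    cases n with
    | zero =>
      simp only [Vv, pow_zero, div_one, Nat.cast_zero, zero_mul, mul_zero, sub_zero]
      have := ratDeriv_div (K := K) (g i) 1 one_ne_zero
      simp only [map_one, div_one, derivative_one, mul_one, mul_zero, sub_zero, one_pow] at this
      rw [this, pow_one, map_mul]
      field_simp
    | succ k =>
      have hp : (algebraMap (Polynomial K) (RatFunc K) r) ^ (k + 1) =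
          algebraMap (Polynomial K) (RatFunc K) (r ^ (k + 1)) := by rw [map_pow]
      rw [Vv, hp, ratDeriv_div _ _ (pow_ne_zero _ hr)]
      rw [div_eq_div_iff (by simpa [map_eq_zero_iff _ hinj] using pow_ne_zero (2*(k+1)) hr)
        (by rw [← map_pow]; simpa [map_eq_zero_iff _ hinj] using pow_ne_zero (k+2) hr)]
      · rw [← map_pow, ← map_mul, ← map_mul]
        congr 1
        rw [derivative_pow]
        have hc : ((k : Polynomial K) + 1) = C ((k : K) + 1) := by
          simp [C_add, Polynomial.C_eq_natCast]
        push_cast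
        rw [hc]
        ring
  rw [nabla, hsum, hrd, ← add_div, ← map_add]
  rfl

lemma Phi_add (m : ℕ) (r : Polynomial K) (b : Matrix (Fin m) (Fin m) (Polynomial K)) (n : ℕ)
    (g1 g2 : Fin m → Polynomial K) :
    Phi m r b n (g1 + g2) = Phi m r b n g1 + Phi m r b n g2 := by
  funext i
  simp only [Phi, Pi.add_apply, derivative_add, Matrix.mulVec_add]
  ring

lemma Vv_sub (m : ℕ) (r : Polynomial K) (a b' : Fin m → Polynomial K) (n : ℕ) :
    Vv m r a n - Vv m r b' n = Vv m r (a - b') n := by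
  funext i
  simp only [Vv, Pi.sub_apply, div_sub_div_same, map_sub]

lemma Vv_shift_entry (r : Polynomial K) (hr : r ≠ 0) (p : Polynomial K) (n j : ℕ) :
    algebraMap (Polynomial K) (RatFunc K) (r ^ j * p) /
      (algebraMap (Polynomial K) (RatFunc K) r) ^ (n + j)
    = algebraMap (Polynomial K) (RatFunc K) p /
      (algebraMap (Polynomial K) (RatFunc K) r) ^ n := by
  have hinj := RatFunc.algebraMap_injective K
  have hR : algebraMap (Polynomial K) (RatFunc K) r ≠ 0 := by
    simpa [map_eq_zero_iff _ hinj] using hr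
  rw [map_mul, map_pow, pow_add, mul_comm ((algebraMap (Polynomial K) (RatFunc K) r) ^ n)]
  exact mul_div_mul_left _ _ (pow_ne_zero _ hR)

lemma Vv_shift (m : ℕ) (r : Polynomial K) (hr : r ≠ 0) (a : Fin m → Polynomial K) (n j : ℕ) :
    Vv m r (fun i => r ^ j * a i) (n + j) = Vv m r a n := by
  funext i
  exact Vv_shift_entry r hr (a i) n j

lemma nabla_Vv_add (m : ℕ) (r : Polynomial K) (hr : r ≠ 0)
    (b : Matrix (Fin m) (Fin m) (Polynomial K)) (a b' : Fin m → Polynomial K) (n : ℕ) :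
    nabla m r b (Vv m r a n) + nabla m r b (Vv m r b' n) = nabla m r b (Vv m r (a + b') n) := by
  rw [nabla_Vv m r hr, nabla_Vv m r hr, nabla_Vv m r hr, Phi_add]
  funext i
  simp only [Vv, Pi.add_apply, ← add_div, map_add]

end Aux

section Aux2

variable {K : Type*} [Field K] [CharZero K]

lemma coprime_of_no_common_root (p q : Polynomial K) (hq : q ≠ 0)
    (h : ∀ γ : AlgebraicClosure K, aeval γ q = 0 → aeval γ p ≠ 0) : IsCoprime p q := by
  classical
  rw [← EuclideanDomain.gcd_isUnit_iff]
  by_contra hu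
  set g := EuclideanDomain.gcd p q with hg
  have hg0 : g ≠ 0 := by
    intro h0
    exact hq (EuclideanDomain.gcd_eq_zero_iff.mp h0).2
  have hdeg : (g.map (algebraMap K (AlgebraicClosure K))).degree ≠ 0 := by
    rw [degree_map_eq_of_injective (algebraMap K (AlgebraicClosure K)).injective]
    intro h0
    exact hu (isUnit_iff_degree_eq_zero.mpr h0)
  obtain ⟨γ, hγ⟩ := IsAlgClosed.exists_root _ hdeg
  have hroot : aeval γ g = 0 := by
    rwa [aeval_def, eval₂_eq_eval_map]
  have hp : aeval γ p = 0 := by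
    obtain ⟨c, hc⟩ := EuclideanDomain.gcd_dvd_left p q
    rw [hc, map_mul, hroot, zero_mul]
  have hqq : aeval γ q = 0 := by
    obtain ⟨c, hc⟩ := EuclideanDomain.gcd_dvd_right p q
    rw [hc, map_mul, hroot, zero_mul]
  exact h γ hqq hp

lemma stepA (m ρ : ℕ) (r : Polynomial K) (hr : r ≠ 0) (hsf : Squarefree r)
    (b : Matrix (Fin m) (Fin m) (Polynomial K))
    (hfin : ∀ (n : ℤ) (γ : AlgebraicClosure K), aeval γ r = 0 →
      ((n : AlgebraicClosure K) • (1 : Matrix (Fin m) (Fin m) (AlgebraicClosure K))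
        - (aeval γ (derivative r))⁻¹ • b.map (fun q => aeval γ q)).det = 0 → n < (ρ : ℤ))
    (n : ℕ) (hn : ρ ≤ n) (f : Fin m → Polynomial K) :
    ∃ g h : Fin m → Polynomial K, ∀ i, f i = Phi m r b n g i + r * h i := by
  classical
  set D : Matrix (Fin m) (Fin m) (Polynomial K) :=
    b - ((n : Polynomial K) * derivative r) • 1 with hD
  have hsep : IsCoprime r (derivative r) := PerfectField.separable_iff_squarefree.mpr hsf
  have hcop : IsCoprime D.det r := by
    apply coprime_of_no_common_root _ _ hr
    intro γ hγ
    have hrp : aeval γ (derivative r) ≠ 0 := by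
      obtain ⟨u, w, huw⟩ := hsep
      intro h0
      have h1 := congrArg (aeval γ) huw
      simp [hγ, h0] at h1
    set c' : AlgebraicClosure K := aeval γ (derivative r) with hc'
    have hmap : (aeval γ : Polynomial K →ₐ[K] AlgebraicClosure K).toRingHom.mapMatrix D
        = b.map (fun q => aeval γ q) - ((n : AlgebraicClosure K) * c') • 1 := by
      ext i j
      simp [hD, Matrix.one_apply, apply_ite (aeval γ), mul_ite, hc']
    have hfactor : b.map (fun q => aeval γ q) - ((n : AlgebraicClosure K) * c') • 1
        = (-c') • (((n : ℤ) : AlgebraicClosure K) • (1 : Matrix (Fin m) (Fin m) (AlgebraicClosure K))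
            - c'⁻¹ • b.map (fun q => aeval γ q)) := by
      rw [smul_sub, smul_smul, smul_smul]
      have e1 : (-c' * ((n : ℤ) : AlgebraicClosure K)) = -((n : ℕ) * c') := by push_cast; ring
      have e2 : (-c') * c'⁻¹ = -1 := by field_simp
      rw [e1, e2, neg_one_smul, neg_smul]
      abel
    intro hdet
    have h2 : ((aeval γ : Polynomial K →ₐ[K] AlgebraicClosure K).toRingHom.mapMatrix D).det = 0 := by
      rw [← RingHom.map_det]
      simpa using hdet
    rw [hmap, hfactor, Matrix.det_smul] at h2
    have h3 : (((n : ℤ) : AlgebraicClosure K) • (1 : Matrix (Fin m) (Fin m) (AlgebraicClosure K))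
        - c'⁻¹ • b.map (fun q => aeval γ q)).det = 0 := by
      rcases mul_eq_zero.mp h2 with h4 | h4
      · exact absurd h4 (pow_ne_zero _ (neg_ne_zero.mpr hrp))
      · exact h4
    have := hfin (n : ℤ) γ hγ h3
    omega
  obtain ⟨u, w, huw⟩ := hcop
  set g : Fin m → Polynomial K := fun i => u * ((D.adjugate).mulVec f i) with hg
  have hDg : D.mulVec g = fun i => (1 - w * r) * f i := by
    have h1 : g = u • (D.adjugate.mulVec f) := rfl
    rw [h1, Matrix.mulVec_smul, Matrix.mulVec_mulVec, Matrix.mul_adjugate,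
      Matrix.smul_mulVec, Matrix.one_mulVec]
    funext i
    simp [smul_smul, Pi.smul_apply, smul_eq_mul]
    linear_combination f i * huw
  refine ⟨g, fun i => w * f i - derivative (g i), fun i => ?_⟩
  have h5 : D.mulVec g i = b.mulVec g i - (n : Polynomial K) * derivative r * g i := by
    rw [hD, Matrix.sub_mulVec, Matrix.smul_mulVec, Matrix.one_mulVec]
    simp [smul_eq_mul]
  have h6 : D.mulVec g i = (1 - w * r) * f i := by rw [hDg]
  rw [h5] at h6
  simp only [Phi]
  linear_combination -h6

lemma stepB_one (m d ρ : ℕ) (hd : 1 ≤ d) (hρ : 1 ≤ ρ)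
    (r : Polynomial K) (hmonic : r.Monic) (hdeg : r.natDegree = d)
    (b : Matrix (Fin m) (Fin m) (Polynomial K)) (hb : ∀ i j, (b i j).degree ≤ (d - 1 : ℕ))
    (hinf : ∀ n : ℤ,
      ((n : AlgebraicClosure K) • (1 : Matrix (Fin m) (Fin m) (AlgebraicClosure K))
        + b.map (fun q => algebraMap K (AlgebraicClosure K) (q.coeff (d - 1)))).det = 0 →
      n < (ρ : ℤ))
    (T : ℕ) (hT : ρ * d + ρ - 1 ≤ T) (f : Fin m → Polynomial K)
    (hf : ∀ i, (f i).degree ≤ (T : ℕ)) :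
    ∃ g : Fin m → Polynomial K, ∀ i,
      (f i - Phi m r b (ρ - 1) g i).degree < (T : ℕ) := by
  classical
  obtain ⟨P, hP⟩ : ∃ P, ρ * d = P := ⟨_, rfl⟩
  have hPd : (ρ - 1) * d = P - d := by rw [Nat.sub_mul, one_mul, hP]
  have hdP : d ≤ P := by rw [← hP]; exact Nat.le_mul_of_pos_left d hρ
  rw [hP] at hT
  have hTd : d ≤ T := by omega
  set e : ℕ := T + 1 - d with he
  have he1 : 1 ≤ e := by omega
  have heT : e - 1 + d = T := by omega
  have heT' : e + (d - 1) = T := by omega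
  set k : ℤ := (e : ℤ) - ((ρ - 1 : ℕ) : ℤ) * d with hk
  have hcast : ((ρ - 1 : ℕ) : ℤ) * (d : ℤ) = ((P - d : ℕ) : ℤ) := by
    rw [← hPd]; push_cast; ring
  have hkρ : (ρ : ℤ) ≤ k := by rw [hk, hcast]; omega
  set B : Matrix (Fin m) (Fin m) K := Matrix.of fun i j => (b i j).coeff (d - 1) with hB
  set M : Matrix (Fin m) (Fin m) K := ((k : K) • 1 + B) with hM
  have hMdet : M.det ≠ 0 := by
    intro h0
    have h1 : ((algebraMap K (AlgebraicClosure K)).mapMatrix M).det = 0 := by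
      rw [← RingHom.map_det, h0, map_zero]
    have h2 : (algebraMap K (AlgebraicClosure K)).mapMatrix M
        = (k : AlgebraicClosure K) • (1 : Matrix (Fin m) (Fin m) (AlgebraicClosure K))
          + b.map (fun q => algebraMap K (AlgebraicClosure K) (q.coeff (d - 1))) := by
      ext i j
      simp [hM, hB, Matrix.one_apply, apply_ite (algebraMap K (AlgebraicClosure K)),
        map_intCast]
    rw [h2] at h1
    have := hinf k h1
    omega
  set c : Fin m → K := fun i => (f i).coeff T with hc
  set c0 : Fin m → K := M.det⁻¹ • (M.adjugate.mulVec c) with hc0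
  have hMc0 : M.mulVec c0 = c := by
    rw [hc0, Matrix.mulVec_smul, Matrix.mulVec_mulVec, Matrix.mul_adjugate,
      Matrix.smul_mulVec, Matrix.one_mulVec, smul_smul, inv_mul_cancel₀ hMdet, one_smul]
  set g : Fin m → Polynomial K := fun i => C (c0 i) * X ^ e with hg
  refine ⟨g, fun i => ?_⟩
  have hgder : ∀ i, derivative (g i) = C (c0 i * (e : K)) * X ^ (e - 1) := by
    intro i
    rw [hg]
    simp only [derivative_C_mul, derivative_X_pow, ← mul_assoc, ← C_mul]
  have hrnat : r.natDegree = d := hdeg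
  have hdegr' : (derivative r).natDegree ≤ d - 1 := by
    have h1 := natDegree_derivative_le r
    omega
  have hgnat : ∀ j, (g j).natDegree ≤ e := by
    intro j
    rw [hg]
    refine le_trans (natDegree_C_mul_le _ _) ?_
    rw [natDegree_X_pow]
  have hbnat : ∀ i j, (b i j).natDegree ≤ d - 1 := fun i j =>
    natDegree_le_iff_degree_le.mpr (hb i j)
  have hPhiDeg : (Phi m r b (ρ - 1) g i).natDegree ≤ T := by
    unfold Phi
    refine le_trans (natDegree_add_le _ _) (max_le ?_ ?_)
    · refine le_trans (natDegree_sub_le _ _) (max_le ?_ ?_)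
      · refine le_trans (natDegree_mul_le) ?_
        have h1 : (derivative (g i)).natDegree ≤ e - 1 := by
          rw [hgder i]
          refine le_trans (natDegree_C_mul_le _ _) ?_
          rw [natDegree_X_pow]
        omega
      · refine le_trans (natDegree_mul_le) ?_
        have h1 : (((ρ - 1 : ℕ) : Polynomial K) * derivative r).natDegree ≤ d - 1 := by
          refine le_trans (natDegree_mul_le) ?_
          simp [natDegree_natCast]
          omega
        have h2 := hgnat i
        omega
    · show (Finset.univ.sum fun j => b i j * g j).natDegree ≤ T
      refine natDegree_sum_le_of_forall_le _ _ fun j _ => ?_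
      refine le_trans (natDegree_mul_le) ?_
      have h1 := hbnat i j
      have h2 := hgnat j
      omega
  have hrconst : r.coeff d = 1 := by rw [← hdeg]; exact hmonic.coeff_natDegree
  have hr'c : (derivative r).coeff (d - 1) = (d : K) := by
    rw [coeff_derivative]
    have h1 : d - 1 + 1 = d := by omega
    rw [h1, hrconst, one_mul, Nat.cast_sub hd]
    ring
  have heTc : d + (e - 1) = T := by omega
  have heTc' : (d - 1) + e = T := by omega
  have hcoeff1 : (derivative (g i) * r).coeff T = c0 i * (e : K) := by
    rw [hgder i, mul_assoc, coeff_C_mul, ← heTc, coeff_X_pow_mul, hrconst, mul_one]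
  have hcoeff2 : ((((ρ - 1 : ℕ) : Polynomial K) * derivative r) * g i).coeff T
      = ((ρ - 1 : ℕ) : K) * (d : K) * c0 i := by
    have h1 : (((ρ - 1 : ℕ) : Polynomial K) * derivative r) * g i
        = C (c0 i) * (X ^ e * (C (((ρ - 1 : ℕ) : K)) * derivative r)) := by
      rw [hg, C_eq_natCast]
      ring
    rw [h1, coeff_C_mul, ← heTc', coeff_X_pow_mul, coeff_C_mul, hr'c]
    ring
  have hcoeff3 : (b.mulVec g i).coeff T = ∑ j, (b i j).coeff (d - 1) * c0 j := by
    show (Finset.univ.sum fun j => b i j * g j).coeff T = _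
    rw [finset_sum_coeff]
    refine Finset.sum_congr rfl fun j _ => ?_
    have h1 : b i j * g j = C (c0 j) * (X ^ e * b i j) := by rw [hg]; ring
    rw [h1, coeff_C_mul, ← heTc', coeff_X_pow_mul]
    ring
  have hMi : (k : K) * c0 i + ∑ j, (b i j).coeff (d - 1) * c0 j = c i := by
    have h1 : M.mulVec c0 i = (k : K) * c0 i + ∑ j, (b i j).coeff (d - 1) * c0 j := by
      rw [hM, Matrix.add_mulVec, Matrix.smul_mulVec, Matrix.one_mulVec]
      simp [Matrix.mulVec, dotProduct, hB, smul_eq_mul]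
    rw [← h1, hMc0]
  have hkK : ((k : ℤ) : K) = (e : K) - ((ρ - 1 : ℕ) : K) * (d : K) := by
    rw [hk]; push_cast; ring
  have hPhiCoeff : (Phi m r b (ρ - 1) g i).coeff T = c i := by
    unfold Phi
    rw [coeff_add, coeff_sub, hcoeff1, hcoeff2, hcoeff3]
    rw [hkK] at hMi
    linear_combination hMi
  rw [degree_lt_iff_coeff_zero]
  intro m' hm'
  rcases eq_or_lt_of_le hm' with h | h
  · rw [coeff_sub, ← h, hPhiCoeff, hc, sub_self]
  · rw [coeff_sub, coeff_eq_zero_of_degree_lt (lt_of_le_of_lt (hf i) (by exact_mod_cast h)),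
      coeff_eq_zero_of_natDegree_lt (lt_of_le_of_lt hPhiDeg h), sub_self]

end Aux2
section Aux3

variable {K : Type*} [Field K] [CharZero K]

lemma stepB (m d ρ : ℕ) (hd : 1 ≤ d) (hρ : 1 ≤ ρ)
    (r : Polynomial K) (hmonic : r.Monic) (hdeg : r.natDegree = d)
    (b : Matrix (Fin m) (Fin m) (Polynomial K)) (hb : ∀ i j, (b i j).degree ≤ (d - 1 : ℕ))
    (hinf : ∀ n : ℤ,
      ((n : AlgebraicClosure K) • (1 : Matrix (Fin m) (Fin m) (AlgebraicClosure K))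
        + b.map (fun q => algebraMap K (AlgebraicClosure K) (q.coeff (d - 1)))).det = 0 →
      n < (ρ : ℤ)) :
    ∀ T : ℕ, ∀ f : Fin m → Polynomial K, (∀ i, (f i).degree ≤ (T : ℕ)) →
      ∃ g h : Fin m → Polynomial K, (∀ i, f i = Phi m r b (ρ - 1) g i + h i) ∧
        ∀ i, (h i).degree < ((ρ * d + ρ - 1 : ℕ) : WithBot ℕ) := by
  intro T
  induction T using Nat.strong_induction_on with
  | _ T IH =>
    intro f hf
    by_cases hT : ρ * d + ρ - 1 ≤ T
    · obtain ⟨g1, hg1⟩ := stepB_one m d ρ hd hρ r hmonic hdeg b hb hinf T hT f hf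
      set f' : Fin m → Polynomial K := fun i => f i - Phi m r b (ρ - 1) g1 i with hf'
      have hN1 : 1 ≤ ρ * d + ρ - 1 := by
        have h0 : 1 * 1 ≤ ρ * d := Nat.mul_le_mul hρ hd
        omega
      have hT1 : 1 ≤ T := le_trans hN1 hT
      have hdeg' : ∀ i, (f' i).degree ≤ ((T - 1 : ℕ) : WithBot ℕ) := by
        intro i
        rw [degree_le_iff_coeff_zero]
        intro m' hm'
        have hm2 : T ≤ m' := by
          have := Nat.cast_lt (α := WithBot ℕ) |>.mp hm'
          omega
        exact (degree_lt_iff_coeff_zero _ _).mp (hg1 i) m' hm2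
      obtain ⟨g2, h, hrel, hsmall⟩ := IH (T - 1) (by omega) f' hdeg'
      refine ⟨g1 + g2, h, fun i => ?_, hsmall⟩
      rw [Phi_add]
      have h1 := hrel i
      rw [hf'] at h1
      simp only [Pi.add_apply] at h1 ⊢
      linear_combination h1
    · refine ⟨0, f, fun i => ?_, fun i => lt_of_le_of_lt (hf i) ?_⟩
      · simp only [Phi, Pi.zero_apply, derivative_zero, zero_mul, mul_zero,
          Matrix.mulVec_zero, sub_zero, add_zero, zero_add, zero_sub, neg_zero]
      · exact_mod_cast Nat.lt_of_not_le hT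

lemma reduce (m d ρ : ℕ) (hd : 1 ≤ d) (hρ : 1 ≤ ρ)
    (r : Polynomial K) (hmonic : r.Monic) (hsf : Squarefree r) (hdeg : r.natDegree = d)
    (b : Matrix (Fin m) (Fin m) (Polynomial K)) (hb : ∀ i j, (b i j).degree ≤ (d - 1 : ℕ))
    (hfin : ∀ (n : ℤ) (γ : AlgebraicClosure K), aeval γ r = 0 →
      ((n : AlgebraicClosure K) • (1 : Matrix (Fin m) (Fin m) (AlgebraicClosure K))
        - (aeval γ (derivative r))⁻¹ • b.map (fun q => aeval γ q)).det = 0 → n < (ρ : ℤ))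
    (hinf : ∀ n : ℤ,
      ((n : AlgebraicClosure K) • (1 : Matrix (Fin m) (Fin m) (AlgebraicClosure K))
        + b.map (fun q => algebraMap K (AlgebraicClosure K) (q.coeff (d - 1)))).det = 0 →
      n < (ρ : ℤ)) :
    ∀ (kk : ℕ) (f : Fin m → Polynomial K),
      ∃ (M : ℕ) (g h : Fin m → Polynomial K),
        Vv m r f (ρ + kk) - nabla m r b (Vv m r g M) = Vv m r h ρ ∧
        ∀ i, (h i).degree < ((ρ * d + ρ - 1 : ℕ) : WithBot ℕ) := by
  have hr : r ≠ 0 := hmonic.ne_zero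
  intro kk
  induction kk with
  | zero =>
    intro f
    set T : ℕ := Finset.univ.sup fun i => (f i).natDegree with hTdef
    have hfT : ∀ i, (f i).degree ≤ (T : ℕ) := by
      intro i
      refine le_trans (degree_le_natDegree) ?_
      exact_mod_cast Finset.le_sup (f := fun i => (f i).natDegree) (Finset.mem_univ i)
    obtain ⟨g, h, hrel, hsmall⟩ := stepB m d ρ hd hρ r hmonic hdeg b hb hinf T f hfT
    refine ⟨ρ - 1, g, h, ?_, hsmall⟩
    have hρ1 : ρ - 1 + 1 = ρ := by omega
    rw [nabla_Vv m r hr, hρ1, Nat.add_zero, Vv_sub]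
    have hnum : (f - Phi m r b (ρ - 1) g) = h := by
      funext i
      simp only [Pi.sub_apply]
      linear_combination hrel i
    rw [hnum]
  | succ kk IH =>
    intro f
    obtain ⟨g1, h1, hA⟩ := stepA m ρ r hr hsf b hfin (ρ + kk) (by omega) f
    obtain ⟨M2, g2, h, hrel2, hsmall⟩ := IH h1
    set Mx : ℕ := max (ρ + kk) M2 with hMx
    set a : Fin m → Polynomial K := fun i => r ^ (Mx - (ρ + kk)) * g1 i with ha
    set b2 : Fin m → Polynomial K := fun i => r ^ (Mx - M2) * g2 i with hb2
    have e1 : Vv m r a Mx = Vv m r g1 (ρ + kk) := by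
      have := Vv_shift m r hr g1 (ρ + kk) (Mx - (ρ + kk))
      rwa [Nat.add_sub_cancel' (le_max_left _ _)] at this
    have e2 : Vv m r b2 Mx = Vv m r g2 M2 := by
      have := Vv_shift m r hr g2 M2 (Mx - M2)
      rwa [Nat.add_sub_cancel' (le_max_right _ _)] at this
    refine ⟨Mx, a + b2, h, ?_, hsmall⟩
    have hsum : nabla m r b (Vv m r (a + b2) Mx)
        = nabla m r b (Vv m r g1 (ρ + kk)) + nabla m r b (Vv m r g2 M2) := by
      rw [← e1, ← e2, nabla_Vv_add m r hr]
    have hstep1 : Vv m r f (ρ + (kk + 1)) - nabla m r b (Vv m r g1 (ρ + kk))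
        = Vv m r h1 (ρ + kk) := by
      rw [nabla_Vv m r hr]
      have hexp : ρ + (kk + 1) = (ρ + kk) + 1 := by omega
      rw [hexp, Vv_sub]
      have hV1 : Vv m r h1 (ρ + kk)
          = Vv m r (fun i => r ^ 1 * h1 i) ((ρ + kk) + 1) := by
        rw [Vv_shift m r hr h1 (ρ + kk) 1]
      rw [hV1]
      have hnum : (f - Phi m r b (ρ + kk) g1) = fun i => r ^ 1 * h1 i := by
        funext i
        simp only [Pi.sub_apply, pow_one]
        linear_combination hA i
      rw [hnum]
    rw [hsum]
    calc Vv m r f (ρ + (kk + 1)) - (nabla m r b (Vv m r g1 (ρ + kk)) + nabla m r b (Vv m r g2 M2))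
        = (Vv m r f (ρ + (kk + 1)) - nabla m r b (Vv m r g1 (ρ + kk)))
            - nabla m r b (Vv m r g2 M2) := by abel
      _ = Vv m r h1 (ρ + kk) - nabla m r b (Vv m r g2 M2) := by rw [hstep1]
      _ = Vv m r h ρ := hrel2

end Aux3
section Final

variable {K : Type*} [Field K]

lemma smul_algebraMap_ratfunc (c : K) (p : Polynomial K) :
    c • (algebraMap (Polynomial K) (RatFunc K) p)
      = algebraMap (Polynomial K) (RatFunc K) (C c * p) := by
  rw [map_mul, Algebra.smul_def, IsScalarTower.algebraMap_apply K (Polynomial K) (RatFunc K),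
    Polynomial.algebraMap_eq]

lemma span_small (m ρ N : ℕ) (hN : 1 ≤ N) (r : Polynomial K)
    (h : Fin m → Polynomial K) (hsmall : ∀ i, (h i).degree < (N : ℕ))
    (S : Set (Fin m → RatFunc K))
    (hS : ∀ k < N, ∀ i : Fin m, Vv m r (fun j => if j = i then X ^ k else 0) ρ ∈ S) :
    Vv m r h ρ ∈ Submodule.span K S := by
  classical
  have hnatdeg : ∀ i, (h i).natDegree < N := by
    intro i
    by_cases h0 : h i = 0
    · rw [h0, natDegree_zero]; omega
    · exact (natDegree_lt_iff_degree_lt h0).mpr (hsmall i)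
  have hexpr : Vv m r h ρ = ∑ p ∈ Finset.range N ×ˢ (Finset.univ : Finset (Fin m)),
      (h p.2).coeff p.1 • Vv m r (fun j => if j = p.2 then X ^ p.1 else 0) ρ := by
    funext j
    rw [Finset.sum_apply, Finset.sum_product_right]
    have hterm : ∀ (i : Fin m) (k : ℕ),
        ((h i).coeff k • Vv m r (fun j' => if j' = i then X ^ k else 0) ρ) j
        = if j = i then
            algebraMap (Polynomial K) (RatFunc K) (C ((h i).coeff k) * X ^ k) /
              (algebraMap (Polynomial K) (RatFunc K) r) ^ ρ
          else 0 := by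
      intro i k
      simp only [Pi.smul_apply, Vv]
      by_cases hji : j = i
      · subst hji
        rw [if_pos rfl, if_pos rfl, ← smul_div_assoc, smul_algebraMap_ratfunc]
      · rw [if_neg hji, if_neg hji]
        simp
    calc (algebraMap (Polynomial K) (RatFunc K) (h j)) /
          (algebraMap (Polynomial K) (RatFunc K) r) ^ ρ
        = ∑ k ∈ Finset.range N,
            algebraMap (Polynomial K) (RatFunc K) (C ((h j).coeff k) * X ^ k) /
              (algebraMap (Polynomial K) (RatFunc K) r) ^ ρ := by
          rw [← Finset.sum_div, ← map_sum]
          congr 2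
          calc h j = ∑ k ∈ Finset.range N, monomial k ((h j).coeff k) :=
                as_sum_range' (h j) N (hnatdeg j)
            _ = ∑ k ∈ Finset.range N, C ((h j).coeff k) * X ^ k := by
                refine Finset.sum_congr rfl fun k _ => ?_
                rw [C_mul_X_pow_eq_monomial]
      _ = ∑ i : Fin m, ∑ k ∈ Finset.range N,
            ((h i).coeff k • Vv m r (fun j' => if j' = i then X ^ k else 0) ρ) j := by
          rw [Finset.sum_comm]
          rw [show (∑ k ∈ Finset.range N, ∑ i : Fin m,
              ((h i).coeff k • Vv m r (fun j' => if j' = i then X ^ k else 0) ρ) j)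
            = ∑ k ∈ Finset.range N, ∑ i : Fin m, if j = i then
                algebraMap (Polynomial K) (RatFunc K) (C ((h i).coeff k) * X ^ k) /
                  (algebraMap (Polynomial K) (RatFunc K) r) ^ ρ else 0 from
            Finset.sum_congr rfl fun k _ => Finset.sum_congr rfl fun i _ => hterm i k]
          refine Finset.sum_congr rfl fun k _ => ?_
          rw [Finset.sum_ite_eq]
          simp
  rw [hexpr]
  refine Submodule.sum_mem _ fun p hp => ?_
  rw [Finset.mem_product, Finset.mem_range] at hp
  exact Submodule.smul_mem _ _ (Submodule.subset_span (hS p.1 hp.1 p.2))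

end Final

/-- Theorem `Thm-BasisdR`: under the hypotheses of the reduction theorem
(`∇ = d/dΓ + b/r` with `r` monic squarefree of degree `d`, `deg b ≤ d-1`, and `ρ`
exceeding all integer local exponents at the roots of `r` and at infinity), the cokernel
`E = coker(∇ : A^m → A^m dΓ)`, `A = K[Γ,1/r]`, is a finite-dimensional `K`-vector space:
there is a finite set of forms with entries in `A` whose images span the cokernel. -/
theorem stmt4 {K : Type*} [Field K] [CharZero K] (m d ρ : ℕ) (hd : 1 ≤ d) (hρ : 1 ≤ ρ)
    (r : Polynomial K) (hmonic : r.Monic) (hsf : Squarefree r) (hdeg : r.natDegree = d)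
    (b : Matrix (Fin m) (Fin m) (Polynomial K)) (hb : ∀ i j, (b i j).degree ≤ (d - 1 : ℕ))
    (hfin : ∀ (n : ℤ) (γ : AlgebraicClosure K), aeval γ r = 0 →
      ((n : AlgebraicClosure K) • (1 : Matrix (Fin m) (Fin m) (AlgebraicClosure K))
        - (aeval γ (derivative r))⁻¹ • b.map (fun q => aeval γ q)).det = 0 → n < (ρ : ℤ))
    (hinf : ∀ n : ℤ,
      ((n : AlgebraicClosure K) • (1 : Matrix (Fin m) (Fin m) (AlgebraicClosure K))
        + b.map (fun q => algebraMap K (AlgebraicClosure K) (q.coeff (d - 1)))).det = 0 →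
      n < (ρ : ℤ)) :
    ∃ s : Finset (Fin m → RatFunc K), (∀ w ∈ s, ∀ i, inA r (w i)) ∧
      ∀ u : Fin m → RatFunc K, (∀ i, inA r (u i)) →
        ∃ v : Fin m → RatFunc K, (∀ i, inA r (v i)) ∧
          u - nabla m r b v ∈ Submodule.span K (s : Set (Fin m → RatFunc K)) := by
  classical
  have hr : r ≠ 0 := hmonic.ne_zero
  set N : ℕ := ρ * d + ρ - 1 with hN
  have hN1 : 1 ≤ N := by
    have h0 : 1 * 1 ≤ ρ * d := Nat.mul_le_mul hρ hd
    omega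
  refine ⟨(Finset.range N ×ˢ (Finset.univ : Finset (Fin m))).image
      (fun p : ℕ × Fin m => Vv m r (fun j => if j = p.2 then X ^ p.1 else 0) ρ), ?_, ?_⟩
  · intro w hw i
    obtain ⟨p, _, rfl⟩ := Finset.mem_image.mp hw
    exact ⟨if i = p.2 then X ^ p.1 else 0, ρ, rfl⟩
  · intro u hu
    choose F n hn using hu
    set E : ℕ := ρ + Finset.univ.sup n with hE
    have hEn : ∀ i, n i ≤ E := fun i =>
      le_trans (Finset.le_sup (Finset.mem_univ i)) (by omega)
    set Fbig : Fin m → Polynomial K := fun i => r ^ (E - n i) * F i with hFbig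
    have huV : u = Vv m r Fbig E := by
      funext i
      rw [hn i, Vv]
      have := Vv_shift_entry r hr (F i) (n i) (E - n i)
      rw [Nat.add_sub_cancel' (hEn i)] at this
      rw [← this]
    obtain ⟨M, g, h, hrel, hsmall⟩ := reduce m d ρ hd hρ r hmonic hsf hdeg b hb hfin hinf
      (Finset.univ.sup n) Fbig
    refine ⟨Vv m r g M, fun i => ⟨g i, M, rfl⟩, ?_⟩
    rw [huV, hE, hrel]
    refine span_small m ρ N hN1 r h (fun i => hsmall i) _ ?_
    intro k hk i
    rw [Finset.mem_coe, Finset.mem_image]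
    exact ⟨(k, i), Finset.mem_product.mpr ⟨Finset.mem_range.mpr hk, Finset.mem_univ i⟩, rfl⟩
end

section
/- Let p be a prime, Δ ≥ 0 and N ≥ 1 integers with gcd(p,N) = 1, and let δ ∈ ℤ_p satisfy δ = ν/N with ν ∈ ℤ, |ν| ≤ 2NΔ. Define θ(δ, s) := ∏_{k=1}^s (δ + k). Then for every positive integer s, ord_p(θ(δ,s)) ≤ s/(p-1) + log_p(1+s) + log_p(2Δ+1) + log_p(N). -/
open Finset

lemma val_prod {p : ℕ} [Fact p.Prime] (t : Finset ℕ) (f : ℕ → ℚ_[p])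
    (h : ∀ k ∈ t, f k ≠ 0) :
    (∏ k ∈ t, f k).valuation = ∑ k ∈ t, (f k).valuation := by
  classical
  induction t using Finset.cons_induction with
  | empty => simp
  | cons a t ha ih =>
    rw [Finset.prod_cons, Finset.sum_cons,
      Padic.valuation_mul (h a (Finset.mem_cons_self a t))
        (Finset.prod_ne_zero_iff.mpr fun k hk => h k (Finset.mem_cons_of_mem hk)),
      ih fun k hk => h k (Finset.mem_cons_of_mem hk)]

lemma count_le {m s : ℕ} (hm : 0 < m) (P : ℕ → Prop) [DecidablePred P]
    (hstep : ∀ k₁ ∈ Finset.Icc 1 s, ∀ k₂ ∈ Finset.Icc 1 s,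
      P k₁ → P k₂ → k₁ < k₂ → m ≤ k₂ - k₁) :
    ((Finset.Icc 1 s).filter P).card ≤ (s - 1) / m + 1 := by
  classical
  have key : ∀ k₁ ∈ Finset.Icc 1 s, ∀ k₂ ∈ Finset.Icc 1 s, P k₁ → P k₂ →
      (k₁ - 1) / m = (k₂ - 1) / m → k₁ = k₂ := by
    intro k₁ h₁ k₂ h₂ p₁ p₂ heq
    simp only [Finset.mem_Icc] at h₁ h₂
    by_contra hne
    rcases Nat.lt_or_ge k₁ k₂ with hlt | hge
    · have hm' := hstep k₁ (Finset.mem_Icc.mpr h₁) k₂ (Finset.mem_Icc.mpr h₂) p₁ p₂ hlt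
      have h3 : (k₁ - 1 + m) / m ≤ (k₂ - 1) / m := Nat.div_le_div_right (by omega)
      rw [Nat.add_div_right _ hm] at h3
      omega
    · have hlt' : k₂ < k₁ := by omega
      have hm' := hstep k₂ (Finset.mem_Icc.mpr h₂) k₁ (Finset.mem_Icc.mpr h₁) p₂ p₁ hlt'
      have h3 : (k₂ - 1 + m) / m ≤ (k₁ - 1) / m := Nat.div_le_div_right (by omega)
      rw [Nat.add_div_right _ hm] at h3
      omega
  have h : ((Finset.Icc 1 s).filter P).card ≤ (Finset.range ((s - 1) / m + 1)).card := by
    apply Finset.card_le_card_of_injOn (fun k => (k - 1) / m)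
    · intro k hk
      simp only [Finset.mem_coe, Finset.mem_filter, Finset.mem_Icc] at hk
      simp only [Finset.mem_coe, Finset.mem_range, Nat.lt_succ_iff]
      exact Nat.div_le_div_right (by omega)
    · intro k₁ h₁ k₂ h₂ heq
      simp only [Finset.coe_filter, Set.mem_setOf_eq, Finset.mem_Icc] at h₁ h₂
      exact key k₁ (Finset.mem_Icc.mpr h₁.1) k₂ (Finset.mem_Icc.mpr h₂.1) h₁.2 h₂.2 heq
  simpa using h

/-- effective Clark bound: let `p` be a prime, `Δ ≥ 0` and `N ≥ 1` integers
with `gcd(p,N) = 1`, and `δ ∈ ℤ_p` with `δ = ν/N`, `ν ∈ ℤ`, `|ν| ≤ 2NΔ`. With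
`θ(δ,s) = ∏_{k=1}^s (δ + k)` (assumed nonzero), for every positive integer `s`,
`ord_p(θ(δ,s)) ≤ s/(p-1) + log_p(1+s) + log_p(2Δ+1) + log_p N`. -/
theorem stmt6 (p : ℕ) [Fact p.Prime] (δ : ℚ_[p]) (hδint : ‖δ‖ ≤ 1)
    (ν : ℤ) (N Δ : ℕ) (hN : 1 ≤ N) (hco : Nat.Coprime p N)
    (hνδ : (N : ℚ_[p]) * δ = (ν : ℚ_[p])) (hν : |ν| ≤ (2 * N * Δ : ℕ))
    (s : ℕ) (hs : 0 < s) (hne : ∀ k ∈ Finset.Icc 1 s, δ + (k : ℚ_[p]) ≠ 0) :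
    (((∏ k ∈ Finset.Icc 1 s, (δ + (k : ℚ_[p]))).valuation : ℝ)) ≤
      (s : ℝ) / (p - 1) + Real.logb p (1 + s) + Real.logb p (2 * Δ + 1) + Real.logb p N := by
  classical
  have hp : 1 < p := (Fact.out : p.Prime).one_lt
  have hpR : (1:ℝ) < p := by exact_mod_cast hp
  set a : ℕ → ℤ := fun k => ν + N * k with ha
  have hNne : (N : ℚ_[p]) ≠ 0 := Nat.cast_ne_zero.mpr (by omega)
  have hcast : ∀ k : ℕ, ((a k : ℤ) : ℚ_[p]) = (N : ℚ_[p]) * (δ + k) := by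
    intro k
    rw [mul_add, hνδ, ha]
    push_cast
    ring
  have hak : ∀ k ∈ Finset.Icc 1 s, a k ≠ 0 := by
    intro k hk h0
    have h1 := hcast k
    rw [h0] at h1
    simp only [Int.cast_zero] at h1
    rcases mul_eq_zero.mp h1.symm with h | h
    · exact hNne h
    · exact hne k hk h
  have hpndvd : ¬ p ∣ N := fun hd => by
    have := Nat.Coprime.eq_one_of_dvd hco hd
    omega
  have hvalN : (N : ℚ_[p]).valuation = 0 := by
    rw [Padic.valuation_natCast, padicValNat.eq_zero_of_not_dvd hpndvd]
    simp
  have hval : ∀ k ∈ Finset.Icc 1 s, (δ + (k : ℚ_[p])).valuation = (padicValInt p (a k) : ℤ) := by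
    intro k hk
    have h1 : ((a k : ℤ) : ℚ_[p]).valuation = padicValInt p (a k) := Padic.valuation_intCast _
    rw [hcast k, Padic.valuation_mul hNne (hne k hk), hvalN, zero_add] at h1
    exact h1
  set v : ℕ → ℕ := fun k => padicValInt p (a k) with hv
  have hprod : ((∏ k ∈ Finset.Icc 1 s, (δ + (k : ℚ_[p]))).valuation : ℝ)
      = ∑ k ∈ Finset.Icc 1 s, (v k : ℝ) := by
    rw [val_prod _ _ hne, Finset.sum_congr rfl hval]
    push_cast
    rfl
  set M : ℕ := N * (2 * Δ + 1) * (1 + s) with hM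
  have hM0 : M ≠ 0 := by positivity
  set J : ℕ := Nat.log p M with hJdef
  have habs : ∀ k ∈ Finset.Icc 1 s, (a k).natAbs ≤ M := by
    intro k hk
    simp only [Finset.mem_Icc] at hk
    have h1 : |a k| ≤ |(ν : ℤ)| + |(N : ℤ) * k| := abs_add_le _ _
    have h2 : |(N : ℤ) * k| = (N : ℤ) * k := abs_of_nonneg (by positivity)
    have h3 : (N : ℤ) * k ≤ (N : ℤ) * s := by
      have hks : (k : ℤ) ≤ s := by exact_mod_cast hk.2
      nlinarith [show (0:ℤ) ≤ N by positivity]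
    have hν' : |ν| ≤ (2 * N * Δ : ℤ) := by exact_mod_cast hν
    have h4 : |a k| ≤ (M : ℤ) := by
      have h5 : (2 * N * Δ : ℤ) + (N : ℤ) * s ≤ (M : ℤ) := by
        push_cast [hM]
        nlinarith [show (0:ℤ) ≤ (N:ℤ) * Δ * s from by positivity,
          show (0:ℤ) ≤ (N:ℤ) from by positivity]
      omega
    rw [Int.abs_eq_natAbs] at h4
    exact_mod_cast h4
  have hvJ : ∀ k ∈ Finset.Icc 1 s, v k ≤ J := by
    intro k hk
    have hd : p ^ v k ∣ (a k).natAbs := pow_padicValNat_dvd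
    have hle : p ^ v k ≤ (a k).natAbs :=
      Nat.le_of_dvd (Int.natAbs_pos.mpr (hak k hk)) hd
    exact (Nat.le_log_iff_pow_le hp hM0).mpr (le_trans hle (habs k hk))
  have hvcard : ∀ k ∈ Finset.Icc 1 s,
      v k = ((Finset.Icc 1 J).filter (fun j => (p : ℤ) ^ j ∣ a k)).card := by
    intro k hk
    have heq : (Finset.Icc 1 J).filter (fun j => (p : ℤ) ^ j ∣ a k)
        = Finset.Icc 1 (v k) := by
      ext j
      simp only [Finset.mem_filter, Finset.mem_Icc, padicValInt_dvd_iff, hak k hk, false_or]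
      have h1 := hvJ k hk
      have h2 : v k = padicValInt p (a k) := rfl
      omega
    rw [heq, Nat.card_Icc]
    omega
  have hswap : ∑ k ∈ Finset.Icc 1 s, v k
      = ∑ j ∈ Finset.Icc 1 J, ((Finset.Icc 1 s).filter (fun k => (p : ℤ) ^ j ∣ a k)).card := by
    rw [Finset.sum_congr rfl hvcard]
    simp only [Finset.card_filter]
    exact Finset.sum_comm
  have hcount : ∀ j ∈ Finset.Icc 1 J,
      (((Finset.Icc 1 s).filter (fun k => (p : ℤ) ^ j ∣ a k)).card : ℝ)
        ≤ (s : ℝ) / (p : ℝ) ^ j + 1 := by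
    intro j hj
    have hpj : 0 < p ^ j := Nat.pow_pos (by omega)
    have hstep : ∀ k₁ ∈ Finset.Icc 1 s, ∀ k₂ ∈ Finset.Icc 1 s,
        (p : ℤ) ^ j ∣ a k₁ → (p : ℤ) ^ j ∣ a k₂ → k₁ < k₂ → p ^ j ≤ k₂ - k₁ := by
      intro k₁ hk₁ k₂ hk₂ P₁ P₂ hlt
      have hd : (p : ℤ) ^ j ∣ (N : ℤ) * ((k₂ : ℤ) - k₁) := by
        have he : (N : ℤ) * ((k₂ : ℤ) - k₁) = a k₂ - a k₁ := by simp only [ha]; ring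
        rw [he]
        exact dvd_sub P₂ P₁
      have hcop : IsCoprime ((p : ℤ) ^ j) (N : ℤ) :=
        (Nat.Coprime.isCoprime hco).pow_left
      have hdk : (p : ℤ) ^ j ∣ (k₂ : ℤ) - k₁ := hcop.dvd_of_dvd_mul_left hd
      have hdk' : (p ^ j : ℕ) ∣ k₂ - k₁ := by
        have hc : ((p ^ j : ℕ) : ℤ) ∣ ((k₂ - k₁ : ℕ) : ℤ) := by
          push_cast [Nat.cast_sub hlt.le]
          exact_mod_cast hdk
        exact_mod_cast hc
      exact Nat.le_of_dvd (by omega) hdk'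
    have hb := count_le hpj (fun k => (p : ℤ) ^ j ∣ a k) hstep
    have hb' : (((Finset.Icc 1 s).filter (fun k => (p : ℤ) ^ j ∣ a k)).card : ℝ)
        ≤ (((s - 1) / p ^ j + 1 : ℕ) : ℝ) := by exact_mod_cast hb
    refine hb'.trans ?_
    have h2 : (((s - 1) / p ^ j : ℕ) : ℝ) ≤ ((s - 1 : ℕ) : ℝ) / ((p ^ j : ℕ) : ℝ) :=
      Nat.cast_div_le
    have h3 : ((s - 1 : ℕ) : ℝ) / ((p ^ j : ℕ) : ℝ) ≤ (s : ℝ) / (p : ℝ) ^ j := by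
      rw [Nat.cast_pow]
      gcongr
      · exact_mod_cast Nat.sub_le s 1
    have h4 : (((s - 1) / p ^ j + 1 : ℕ) : ℝ) = (((s - 1) / p ^ j : ℕ) : ℝ) + 1 := by
      push_cast; ring
    rw [h4]
    linarith
  -- geometric sum bound
  have hgeom : ∑ j ∈ Finset.Icc 1 J, ((p : ℝ) ^ j)⁻¹ ≤ ((p : ℝ) - 1)⁻¹ := by
    have hx0 : (0 : ℝ) < (p : ℝ)⁻¹ := by positivity
    have hx1 : (p : ℝ)⁻¹ < 1 := by
      rw [inv_lt_one_iff₀]; right; exact hpR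
    have heq : ∀ n : ℕ, ∑ j ∈ Finset.Icc 1 n, ((p : ℝ)⁻¹) ^ j
        = (p : ℝ)⁻¹ * (1 - ((p : ℝ)⁻¹) ^ n) / (1 - (p : ℝ)⁻¹) := by
      intro n
      induction n with
      | zero => simp
      | succ m ih =>
        have h1 : (1 : ℝ) - (p : ℝ)⁻¹ ≠ 0 := by
          intro h; nlinarith
        rw [Finset.sum_Icc_succ_top (by omega), ih, div_add' _ _ _ h1]
        have h5 : (p : ℝ)⁻¹ * (1 - ((p : ℝ)⁻¹) ^ m) + ((p : ℝ)⁻¹) ^ (m + 1) * (1 - (p : ℝ)⁻¹)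
            = (p : ℝ)⁻¹ * (1 - ((p : ℝ)⁻¹) ^ (m + 1)) := by ring
        rw [h5]
    have h4 : ∑ j ∈ Finset.Icc 1 J, ((p : ℝ) ^ j)⁻¹
        = ∑ j ∈ Finset.Icc 1 J, ((p : ℝ)⁻¹) ^ j := by
      refine Finset.sum_congr rfl fun j _ => ?_
      rw [inv_pow]
    have hfin : (p : ℝ)⁻¹ * (1 - ((p : ℝ)⁻¹) ^ J) / (1 - (p : ℝ)⁻¹) ≤ ((p : ℝ) - 1)⁻¹ := by
      have hd : (0:ℝ) < 1 - (p : ℝ)⁻¹ := by linarith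
      have hxx : ((p : ℝ) - 1)⁻¹ = (p : ℝ)⁻¹ / (1 - (p : ℝ)⁻¹) := by
        rw [eq_div_iff hd.ne']
        field_simp
        exact div_self (ne_of_gt (by nlinarith))
      rw [hxx, div_le_div_iff_of_pos_right hd]
      have hpow : 0 ≤ ((p : ℝ)⁻¹) ^ J := by positivity
      nlinarith
    rw [h4, heq J]
    exact hfin
  have hJlog : (J : ℝ) ≤ Real.logb p M := by
    have h1 : ((p : ℝ)) ^ J ≤ (M : ℝ) := by exact_mod_cast Nat.pow_log_le_self p hM0
    have h2 : Real.logb p ((p : ℝ) ^ J) ≤ Real.logb p M :=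
      Real.logb_le_logb_of_le hpR (by positivity) h1
    rwa [Real.logb_pow, Real.logb_self_eq_one hpR, mul_one] at h2
  have hMcast : (M : ℝ) = (N : ℝ) * (2 * (Δ:ℝ) + 1) * (1 + (s:ℝ)) := by
    rw [hM]; push_cast; ring
  have hlogM : Real.logb p M
      = Real.logb p (1 + (s:ℝ)) + Real.logb p (2*(Δ:ℝ)+1) + Real.logb p N := by
    rw [hMcast, Real.logb_mul (by positivity) (by positivity),
      Real.logb_mul (by positivity) (by positivity)]
    ring
  have hswapR : ∑ k ∈ Finset.Icc 1 s, (v k : ℝ)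
      = ∑ j ∈ Finset.Icc 1 J,
          (((Finset.Icc 1 s).filter (fun k => (p : ℤ) ^ j ∣ a k)).card : ℝ) := by
    exact_mod_cast congrArg (Nat.cast : ℕ → ℝ) hswap
  have hsum : ∑ k ∈ Finset.Icc 1 s, (v k : ℝ) ≤ (s:ℝ)/((p:ℝ)-1) + J := by
    rw [hswapR]
    calc ∑ j ∈ Finset.Icc 1 J,
          (((Finset.Icc 1 s).filter (fun k => (p : ℤ) ^ j ∣ a k)).card : ℝ)
        ≤ ∑ j ∈ Finset.Icc 1 J, ((s : ℝ) / (p : ℝ) ^ j + 1) := Finset.sum_le_sum hcount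
      _ = (∑ j ∈ Finset.Icc 1 J, (s : ℝ) / (p : ℝ) ^ j) + J := by
          rw [Finset.sum_add_distrib]
          simp [Nat.card_Icc]
      _ ≤ (s:ℝ)/((p:ℝ)-1) + J := by
          have h2 : ∑ j ∈ Finset.Icc 1 J, (s : ℝ) / (p : ℝ) ^ j
              = (s:ℝ) * ∑ j ∈ Finset.Icc 1 J, ((p : ℝ) ^ j)⁻¹ := by
            rw [Finset.mul_sum]
            exact Finset.sum_congr rfl fun j _ => div_eq_mul_inv _ _
          rw [h2]
          have h3 : (s:ℝ) * ∑ j ∈ Finset.Icc 1 J, ((p : ℝ) ^ j)⁻¹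
              ≤ (s:ℝ) * ((p:ℝ)-1)⁻¹ :=
            mul_le_mul_of_nonneg_left hgeom (by positivity)
          rw [div_eq_mul_inv]
          linarith
  rw [hprod]
  calc ∑ k ∈ Finset.Icc 1 s, (v k : ℝ) ≤ (s:ℝ)/((p:ℝ)-1) + J := hsum
    _ ≤ (s:ℝ)/((p:ℝ)-1) + Real.logb p M := by linarith
    _ = (s : ℝ) / (p - 1) + Real.logb p (1 + s) + Real.logb p (2 * Δ + 1) + Real.logb p N := by
        rw [hlogM]; push_cast; ring
end

section
/- Let p be a prime and let λ_1, …, λ_m ∈ ℤ_p be p-adic integers with λ_i = μ_i/N, μ_i ∈ ℤ, |λ_i| ≤ Δ (for integers N ≥ 1 coprime to p and Δ ≥ 0). Let ℓ ≥ 1 be an integer with ℓ ≥ Δ + 1 (so ℓ exceeds |λ_i|). Then for every integer j with 0 ≤ j ≤ ℓ - Δ - 1, ord_p(∏_{i=1}^m (λ_i - ℓ + j)) ≤ m·(log_p(ℓ - Δ - 1 + 1) + log_p(N) + log_p(2Δ+2)), where log_p(0) is interpreted as 0. -/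
/-- let `p` be a prime and `λ_1, …, λ_m ∈ ℤ_p` with `λ_i = μ_i/N`,
`μ_i ∈ ℤ`, `|λ_i| ≤ Δ` (i.e. `|μ_i| ≤ NΔ`), for integers `N ≥ 1` coprime to `p` and
`Δ ≥ 0`. Let `ℓ ≥ Δ + 1`. Then for every integer `j` with `0 ≤ j ≤ ℓ - Δ - 1`,
`ord_p(∏_i (λ_i - ℓ + j)) ≤ m·(log_p(ℓ - Δ - 1 + 1) + log_p N + log_p (2Δ+2))`
(with `log_p 0 = 0`, the convention built into `Real.logb`). -/
theorem stmt7 (p : ℕ) [Fact p.Prime] (m : ℕ) (lam : Fin m → ℚ_[p]) (μ : Fin m → ℤ)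
    (N Δ : ℕ) (hN : 1 ≤ N) (hco : Nat.Coprime p N)
    (hint : ∀ i, ‖lam i‖ ≤ 1)
    (hfrac : ∀ i, (N : ℚ_[p]) * lam i = (μ i : ℚ_[p]))
    (hbd : ∀ i, |μ i| ≤ (N * Δ : ℕ))
    (ℓ : ℕ) (hℓ : Δ + 1 ≤ ℓ) (j : ℕ) (hj : j + Δ + 1 ≤ ℓ) :
    (((∏ i, (lam i - (ℓ : ℚ_[p]) + (j : ℚ_[p]))).valuation : ℝ)) ≤
      (m : ℝ) * (Real.logb p ((ℓ : ℝ) - Δ - 1 + 1) + Real.logb p N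
        + Real.logb p (2 * Δ + 2)) := by
  have hp := (Fact.out : p.Prime)
  have hp1 : (1 : ℝ) < p := by exact_mod_cast hp.one_lt
  have hΔℓ : Δ ≤ ℓ := by omega
  -- integer numerators
  set x : Fin m → ℤ := fun i => μ i + (N : ℤ) * j - (N : ℤ) * ℓ with hxdef
  set K : ℕ := (ℓ - Δ) * N * (2 * Δ + 2) with hKdef
  have hK1 : 1 ≤ K := by
    have : 1 ≤ ℓ - Δ := by omega
    calc 1 = 1 * 1 * 1 := by ring
    _ ≤ (ℓ - Δ) * N * (2 * Δ + 2) := by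
        apply Nat.mul_le_mul (Nat.mul_le_mul this hN); omega
  have hxne : ∀ i, x i ≠ 0 := by
    intro i
    have h1 := (abs_le.mp (hbd i)).2
    have h2 : (N : ℤ) * j + N ≤ (N:ℤ) * ℓ - N * Δ := by
      have : (j : ℤ) + Δ + 1 ≤ ℓ := by exact_mod_cast hj
      nlinarith [Int.natCast_pos.mpr (show 0 < N by omega)]
    have : x i < 0 := by
      push_cast at h1 ⊢
      simp only [hxdef]
      have hN' : (0:ℤ) < N := by exact_mod_cast hN
      nlinarith
    omega
  have hxbd : ∀ i, (x i).natAbs ≤ K := by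
    intro i
    have h1 := abs_le.mp (hbd i)
    have hj' : (j : ℤ) + Δ + 1 ≤ ℓ := by exact_mod_cast hj
    have hN' : (1:ℤ) ≤ N := by exact_mod_cast hN
    have : |x i| ≤ (K : ℤ) := by
      rw [hKdef]
      push_cast [Nat.cast_sub hΔℓ] at h1 ⊢
      rw [abs_le]
      constructor <;> simp only [hxdef] <;> nlinarith [sq_nonneg ((Δ:ℤ) - ℓ)]
    rw [Int.abs_eq_natAbs] at this
    exact_mod_cast this
  -- product identity
  set X : ℤ := ∏ i, x i with hXdef
  have hfac : ∀ i, (N : ℚ_[p]) * (lam i - (ℓ : ℚ_[p]) + (j : ℚ_[p])) = ((x i : ℤ) : ℚ_[p]) := by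
    intro i
    simp only [hxdef]
    push_cast
    rw [mul_add, mul_sub, hfrac i]
    ring
  have hprod : ((N : ℚ_[p])) ^ m * (∏ i, (lam i - (ℓ : ℚ_[p]) + (j : ℚ_[p]))) = (X : ℚ_[p]) := by
    rw [hXdef, Int.cast_prod, ← Finset.prod_congr rfl (fun i _ => hfac i),
      Finset.prod_mul_distrib, Finset.prod_const, Finset.card_univ, Fintype.card_fin]
  have hXne : X ≠ 0 := Finset.prod_ne_zero_iff.mpr fun i _ => hxne i
  have hNne : (N : ℚ_[p]) ≠ 0 := by
    exact_mod_cast Nat.cast_ne_zero.mpr (by omega)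
  have hPne : (∏ i, (lam i - (ℓ : ℚ_[p]) + (j : ℚ_[p]))) ≠ 0 := by
    intro h
    rw [h, mul_zero] at hprod
    exact_mod_cast (Int.cast_ne_zero (α := ℚ_[p])).mpr hXne hprod.symm
  -- valuation of N^m is zero
  have hvalN : ((N : ℚ_[p]) ^ m).valuation = 0 := by
    have : ((N : ℚ_[p]) ^ m) = ((N ^ m : ℕ) : ℚ_[p]) := by push_cast; ring
    rw [this, Padic.valuation_natCast,
      padicValNat.eq_zero_of_not_dvd
        (fun h => hp.coprime_iff_not_dvd.mp hco (hp.dvd_of_dvd_pow h))]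
    rfl
  have hvalP : (∏ i, (lam i - (ℓ : ℚ_[p]) + (j : ℚ_[p]))).valuation = padicValInt p X := by
    have h1 := Padic.valuation_mul (x := (N : ℚ_[p]) ^ m)
      (y := ∏ i, (lam i - (ℓ : ℚ_[p]) + (j : ℚ_[p]))) (pow_ne_zero m hNne) hPne
    rw [hprod, Padic.valuation_intCast, hvalN, zero_add] at h1
    exact h1.symm
  rw [hvalP]
  set v : ℕ := padicValInt p X with hv
  -- p^v ≤ K^m
  have hdvd : (p : ℤ) ^ v ∣ X := padicValInt_dvd X
  have hple : p ^ v ≤ K ^ m := by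
    have h1 : p ^ v ∣ X.natAbs := by
      have h := Int.natAbs_dvd_natAbs.mpr hdvd
      rwa [Int.natAbs_pow, Int.natAbs_natCast] at h
    have h2 : X.natAbs ≤ K ^ m := by
      rw [hXdef, show (∏ i, x i).natAbs = ∏ i, (x i).natAbs from map_prod Int.natAbsHom x Finset.univ]
      calc ∏ i, (x i).natAbs ≤ K ^ Finset.univ.card :=
            Finset.prod_le_pow_card _ _ _ fun i _ => hxbd i
      _ = K ^ m := by rw [Finset.card_univ, Fintype.card_fin]
    exact (Nat.le_of_dvd (Int.natAbs_pos.mpr hXne) h1).trans h2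
  -- pass to real logb
  have hreal : (v : ℝ) ≤ (m : ℝ) * Real.logb p K := by
    have h1 : ((p : ℝ)) ^ v ≤ ((K : ℝ)) ^ m := by exact_mod_cast hple
    have h2 := Real.logb_le_logb_of_le hp1 (pow_pos (by linarith) v) h1
    rwa [Real.logb_pow, Real.logb_pow, Real.logb_self_eq_one hp1, mul_one] at h2
  refine hreal.trans (le_of_eq ?_)
  congr 1
  have hK : (K : ℝ) = ((ℓ : ℝ) - Δ) * N * (2 * Δ + 2) := by
    rw [hKdef]; push_cast [Nat.cast_sub hΔℓ]; ring
  have hℓΔ : (0:ℝ) < (ℓ : ℝ) - Δ := by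
    have : (Δ:ℝ) + 1 ≤ ℓ := by exact_mod_cast hℓ
    linarith
  have hNpos : (0:ℝ) < (N:ℝ) := by exact_mod_cast hN
  rw [hK, Real.logb_mul (by positivity) (by positivity),
    Real.logb_mul (by positivity) (by positivity)]
  ring_nf
end
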